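/- arXiv:1405.3030 — 3 statements merged into one kernel-verified Lean document; each statement's English description precedes it below -/
import Mathlib

section
/- Suppose D is a non-trivial G-pairwise transitive 2-(v,k,λ) design, and the permutation group G^B induced on blocks has rank 3 and is primitive. Then G is almost simple, i.e. G has a nonabelian simple normal subgroup T whose centraliser in G is trivial. -/
/-- The incidence relation `I` makes `P` (points) and `B` (blocks) into a
2-(v, k, l) design. -/
def Is2Design {P B : Type*} (I : P → B → Prop) (v k l : ℕ) : Prop :=
  Nat.card P = v ∧ 2 ≤ k ∧ (∀ b : B, Nat.card {p : P // I p b} = k) ∧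
    ∀ p q : P, p ≠ q → Nat.card {b : B // I p b ∧ I q b} = l

/-- The design with incidence `I` is `G`-pairwise transitive: `G` is transitive on
ordered pairs of distinct points, incident point-block pairs, non-incident
point-block pairs, ordered pairs of distinct blocks with a common point, and
ordered pairs of blocks with no common point. -/
def PairwiseTransitive (G : Type*) {P B : Type*} [Group G] [MulAction G P] [MulAction G B]
    (I : P → B → Prop) : Prop :=
  (∀ p₁ p₂ q₁ q₂ : P, p₁ ≠ p₂ → q₁ ≠ q₂ → ∃ g : G, g • p₁ = q₁ ∧ g • p₂ = q₂) ∧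
  (∀ (p p' : P) (b b' : B), I p b → I p' b' → ∃ g : G, g • p = p' ∧ g • b = b') ∧
  (∀ (p p' : P) (b b' : B), ¬ I p b → ¬ I p' b' → ∃ g : G, g • p = p' ∧ g • b = b') ∧
  (∀ b₁ b₂ b₁' b₂' : B, b₁ ≠ b₂ → b₁' ≠ b₂' → (∃ p, I p b₁ ∧ I p b₂) →
    (∃ p, I p b₁' ∧ I p b₂') → ∃ g : G, g • b₁ = b₁' ∧ g • b₂ = b₂') ∧
  (∀ b₁ b₂ b₁' b₂' : B, (¬ ∃ p, I p b₁ ∧ I p b₂) → (¬ ∃ p, I p b₁' ∧ I p b₂') →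
    ∃ g : G, g • b₁ = b₁' ∧ g • b₂ = b₂')

/-- The action of `G` on `X` is 2-transitive. -/
def IsDoublyTransitive (G X : Type*) [Group G] [MulAction G X] : Prop :=
  ∀ x₁ x₂ y₁ y₂ : X, x₁ ≠ x₂ → y₁ ≠ y₂ → ∃ g : G, g • x₁ = y₁ ∧ g • x₂ = y₂

/-- The permutation group induced by `G` on `X` is transitive of rank `n`:
a point stabiliser has exactly `n` orbits on `X`. -/
def HasRank (G X : Type*) [Group G] [MulAction G X] (n : ℕ) : Prop :=
  MulAction.IsPretransitive G X ∧
    ∀ x : X, Nat.card (Quotient (MulAction.orbitRel (MulAction.stabilizer G x) X)) = n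

open scoped Pointwise

/-- The permutation group induced by `G` on `X` is primitive: it is transitive and
the only `G`-invariant partitions of `X` are the partition into singletons and the
partition with a single part. -/
def IsPrimitiveOn (G X : Type*) [Group G] [MulAction G X] : Prop :=
  MulAction.IsPretransitive G X ∧
    ∀ S : Set (Set X), Setoid.IsPartition S → (∀ (g : G), ∀ s ∈ S, g • s ∈ S) →
      (∀ s ∈ S, ∃ x : X, s = {x}) ∨ S = {Set.univ}

/-- `G` is almost simple: it has a nonabelian simple normal subgroup with trivial
centraliser. -/
def IsAlmostSimple (G : Type*) [Group G] : Prop :=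
  ∃ T : Subgroup G, T.Normal ∧ IsSimpleGroup T ∧
    (∃ x ∈ T, ∃ y ∈ T, x * y ≠ y * x) ∧ Subgroup.centralizer (T : Set G) = ⊥


section SubgroupHelpers
variable {G : Type*} [Group G]

/-- conjugate subgroup -/
def cjSub (g : G) (H : Subgroup G) : Subgroup G := H.map (MulAut.conj g).toMonoidHom

lemma mem_cjSub {g x : G} {H : Subgroup G} : x ∈ cjSub g H ↔ g⁻¹ * x * g ∈ H := by
  constructor
  · rintro ⟨h, hh, rfl⟩
    simpa [MulAut.conj_apply, mul_assoc] using hh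
  · intro h
    refine ⟨g⁻¹ * x * g, h, ?_⟩
    simp [MulAut.conj_apply, mul_assoc]

lemma cjSub_mem {g x : G} {H : Subgroup G} (hx : x ∈ H) : g * x * g⁻¹ ∈ cjSub g H := by
  rw [mem_cjSub]; group; simpa using hx

lemma cjSub_cjSub {g h : G} {H : Subgroup G} : cjSub g (cjSub h H) = cjSub (g * h) H := by
  ext x; simp only [mem_cjSub]
  constructor <;> intro hx
  · convert hx using 1; group
  · convert hx using 1; group

lemma cjSub_one {H : Subgroup G} : cjSub (1 : G) H = H := by
  ext x; simp [mem_cjSub]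

lemma cjSub_inv_eq {g : G} {H K : Subgroup G} (h : cjSub g H = K) : cjSub g⁻¹ K = H := by
  rw [← h, cjSub_cjSub]; simp [cjSub_one]

lemma cjSub_le_cjSub {g : G} {H K : Subgroup G} (h : H ≤ K) : cjSub g H ≤ cjSub g K := by
  intro x hx; rw [mem_cjSub] at hx ⊢; exact h hx

lemma cjSub_ne_bot {g : G} {H : Subgroup G} (h : H ≠ ⊥) : cjSub g H ≠ ⊥ := by
  intro e
  apply h
  rw [eq_bot_iff]
  intro x hx
  have : g * x * g⁻¹ ∈ cjSub g H := cjSub_mem hx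
  rw [e, Subgroup.mem_bot] at this
  have : x = 1 := by
    have := congrArg (fun y => g⁻¹ * y * g) this
    simpa [mul_assoc] using this
  simp [this]

lemma cjSub_eq_of_normal {g : G} {N : Subgroup G} (hN : N.Normal) : cjSub g N = N := by
  ext x
  rw [mem_cjSub]
  constructor
  · intro h
    have := hN.conj_mem _ h g
    simpa [mul_assoc] using this
  · intro h
    have := hN.conj_mem _ h g⁻¹
    simpa [mul_assoc] using this

/-- `K` is normalized by `N` -/
def NormalIn (N K : Subgroup G) : Prop := ∀ n ∈ N, ∀ x ∈ K, n * x * n⁻¹ ∈ K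

lemma cjSub_eq_of_normalIn {N K : Subgroup G} (h : NormalIn N K) {n : G} (hn : n ∈ N) :
    cjSub n K = K := by
  ext x
  rw [mem_cjSub]
  constructor
  · intro hx
    have := h n hn _ hx
    simpa [mul_assoc] using this
  · intro hx
    have := h n⁻¹ (inv_mem hn) _ hx
    simpa [mul_assoc] using this

lemma normalIn_cjSub {N K : Subgroup G} (hN : N.Normal) (h : NormalIn N K) (g : G) :
    NormalIn N (cjSub g K) := by
  intro n hn x hx
  rw [mem_cjSub] at hx ⊢
  have hn' : g⁻¹ * n * g ∈ N := by
    have := hN.conj_mem n hn g⁻¹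
    simpa [mul_assoc] using this
  have hc := h _ hn' _ hx
  convert hc using 1
  group

lemma normalIn_inf {N K L : Subgroup G} (hK : NormalIn N K) (hL : NormalIn N L) :
    NormalIn N (K ⊓ L) := fun n hn x hx => ⟨hK n hn x hx.1, hL n hn x hx.2⟩

/-- existence of a minimal subgroup satisfying a predicate, below a given one -/
lemma exists_minimal_subgroup [Finite G] (Q : Subgroup G → Prop) :
    ∀ N₀ : Subgroup G, Q N₀ → ∃ N : Subgroup G, Q N ∧ N ≤ N₀ ∧
      ∀ K : Subgroup G, Q K → K ≤ N → K = N := by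
  intro N₀
  induction' hn : Nat.card N₀ using Nat.strong_induction_on with n ih generalizing N₀
  intro hQ
  by_cases h : ∃ K, Q K ∧ K < N₀
  · obtain ⟨K, hK, hKlt⟩ := h
    have hcard : Nat.card K < n := by
      subst hn
      have hss : (K : Set G) ⊂ (N₀ : Set G) :=
        Set.ssubset_iff_subset_ne.2 ⟨hKlt.le, fun e => hKlt.ne (SetLike.coe_injective e)⟩
      have := Set.ncard_lt_ncard hss (Set.toFinite _)
      exact (Nat.card_coe_set_eq (K : Set G)).trans_lt (this.trans_eq (Nat.card_coe_set_eq (N₀ : Set G)).symm)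
    obtain ⟨N, h1, h2, h3⟩ := ih _ hcard K rfl hK
    exact ⟨N, h1, h2.trans hKlt.le, h3⟩
  · push_neg at h
    refine ⟨N₀, hQ, le_rfl, fun K hK hle => ?_⟩
    by_contra hne
    exact (h K hK).elim (lt_of_le_of_ne hle hne)

end SubgroupHelpers

section OrbitHelpers
variable {G : Type*} [Group G] {X : Type*} [MulAction G X]

/-- orbit of a subgroup, as a plain set -/
def sorb (A : Subgroup G) (x : X) : Set X := {y | ∃ a ∈ A, a • x = y}

lemma sorb_refl (A : Subgroup G) (x : X) : x ∈ sorb A x := ⟨1, A.one_mem, one_smul _ _⟩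

lemma sorb_eq_of_mem {A : Subgroup G} {x y : X} (h : y ∈ sorb A x) : sorb A y = sorb A x := by
  obtain ⟨a, ha, rfl⟩ := h
  ext z
  constructor
  · rintro ⟨b, hb, rfl⟩
    exact ⟨b * a, A.mul_mem hb ha, by rw [mul_smul]⟩
  · rintro ⟨b, hb, rfl⟩
    refine ⟨b * a⁻¹, A.mul_mem hb (A.inv_mem ha), ?_⟩
    rw [mul_smul, inv_smul_smul]

lemma sorb_mono {A C : Subgroup G} (h : A ≤ C) (x : X) : sorb A x ⊆ sorb C x := by
  rintro z ⟨a, ha, rfl⟩; exact ⟨a, h ha, rfl⟩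

lemma card_of_regular {A : Subgroup G} {x₀ : X}
    (htrans : ∀ y : X, ∃ a ∈ A, a • x₀ = y)
    (hsemi : ∀ a ∈ A, a • x₀ = x₀ → a = 1) :
    Nat.card ↥A = Nat.card X := by
  apply Nat.card_congr
  refine Equiv.ofBijective (fun a : ↥A => (a : G) • x₀) ⟨?_, ?_⟩
  · intro a b hab
    have hab' : (a : G) • x₀ = (b : G) • x₀ := hab
    have h1 : ((b : G)⁻¹ * a) • x₀ = x₀ := by
      rw [mul_smul, hab', inv_smul_smul]
    have h2 := hsemi _ (A.mul_mem (A.inv_mem b.2) a.2) h1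
    have h3 : (b : G) = (a : G) := by
      have := congrArg (fun y => (b : G) * y) h2
      simpa [mul_assoc] using this.symm
    exact Subtype.ext h3.symm
  · intro y
    obtain ⟨a, ha, haa⟩ := htrans y
    exact ⟨⟨a, ha⟩, haa⟩

end OrbitHelpers

/-- abstract "two orbit systems covering everything" contradiction -/
lemma cover_contra {α : Type*} [Nonempty α] (ρ μ : α → Set α)
    (hρr : ∀ x, x ∈ ρ x) (hρe : ∀ {x y}, y ∈ ρ x → ρ y = ρ x)
    (hμr : ∀ x, x ∈ μ x) (hμe : ∀ {x y}, y ∈ μ x → μ y = μ x)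
    (hcov : ∀ x y, y ∈ ρ x ∨ y ∈ μ x)
    (hρn : ∀ x, ρ x ≠ Set.univ) (hμn : ∀ x, μ x ≠ Set.univ) : False := by
  obtain ⟨x⟩ := ‹Nonempty α›
  have hne : ∃ x', x' ∉ μ x := by
    by_contra h
    push_neg at h
    exact hμn x (Set.eq_univ_of_forall h)
  obtain ⟨x', hx'⟩ := hne
  have hxx' : x ∉ μ x' := by
    intro h
    have h2 := hμr x'
    rw [← hμe h] at h2
    exact hx' h2
  have hρeq : ρ x = ρ x' := by
    rcases hcov x' x with h | h
    · exact hρe h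
    · exact absurd h hxx'
  apply hρn x
  apply Set.eq_univ_of_forall
  intro w
  rcases hcov x w with h | h
  · exact h
  · have hw : w ∉ μ x' := by
      intro hw
      have := hμe hw
      have := hμe h
      exact hx' (by rw [← this, ‹μ w = μ x'›]; exact hμr x')
    rcases hcov x' w with h2 | h2
    · rw [hρeq]; exact h2
    · exact absurd h2 hw


lemma nat_cast_mul_pred (n : ℕ) : ((n * (n - 1) : ℕ) : ℤ) = (n : ℤ) * ((n : ℤ) - 1) := by
  cases n with
  | zero => simp
  | succ m => push_cast [Nat.succ_sub_one]; ring

lemma filter_erase_comm {γ : Type*} [Fintype γ] [DecidableEq γ] (pred : γ → Prop)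
    [DecidablePred pred] (c : γ) :
    ((Finset.univ.erase c).filter pred) = (Finset.univ.filter pred).erase c := by
  ext x; simp [Finset.mem_erase, and_comm]

lemma erase_count {γ : Type*} [Fintype γ] [DecidableEq γ] (pred : γ → Prop)
    [DecidablePred pred] (c : γ) (hc : pred c) :
    ∑ x ∈ Finset.univ.erase c, (if pred x then 1 else 0) =
      (Finset.univ.filter pred).card - 1 := by
  rw [← Finset.card_filter, filter_erase_comm,
    Finset.card_erase_of_mem (by simp [hc])]

lemma design_blocks_meet {P B : Type*} [Finite P] [Finite B]
    (I : P → B → Prop) (k l r₀ : ℕ) (hk2 : 2 ≤ k)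
    (hcard : Nat.card B = Nat.card P)
    (hkb : ∀ b : B, Nat.card {p : P // I p b} = k)
    (hl : ∀ p q : P, p ≠ q → Nat.card {b : B // I p b ∧ I q b} = l)
    (hr : ∀ p : P, Nat.card {b : B // I p b} = r₀)
    (b₀ b₁ : B) (hd : ∀ p, ¬ (I p b₀ ∧ I p b₁)) : False := by
  classical
  letI : Fintype P := Fintype.ofFinite P
  letI : Fintype B := Fintype.ofFinite B
  have hKb : ∀ b : B, (Finset.univ.filter fun p => I p b).card = k := by
    intro b
    have := hkb b
    rwa [Nat.card_eq_fintype_card, Fintype.card_subtype] at this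
  have hRp : ∀ p : P, (Finset.univ.filter fun b => I p b).card = r₀ := by
    intro p
    have := hr p
    rwa [Nat.card_eq_fintype_card, Fintype.card_subtype] at this
  have hLpq : ∀ p q : P, p ≠ q → (Finset.univ.filter fun b => I p b ∧ I q b).card = l := by
    intro p q h
    have := hl p q h
    rwa [Nat.card_eq_fintype_card, Fintype.card_subtype] at this
  have hPB : Fintype.card B = Fintype.card P := by
    rw [← Nat.card_eq_fintype_card, ← Nat.card_eq_fintype_card]; exact hcard
  haveI : Nonempty P := by
    have h := hKb b₀
    have : (Finset.univ.filter fun p => I p b₀).Nonempty := by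
      rw [← Finset.card_pos, h]; omega
    exact ⟨this.choose⟩
  have hPpos : 0 < Fintype.card P := Fintype.card_pos
  have hb01 : b₀ ≠ b₁ := by
    intro h
    subst h
    have he : (Finset.univ.filter fun p => I p b₀) = ∅ := by
      rw [Finset.filter_eq_empty_iff]
      intro p _ hp
      exact hd p ⟨hp, hp⟩
    have := hKb b₀
    rw [he] at this
    simp at this
    omega
  -- l ≥ 1
  have hl1 : 1 ≤ l := by
    have h2 : 1 < (Finset.univ.filter fun p => I p b₀).card := by rw [hKb b₀]; omega
    obtain ⟨p, hp, q, hq, hpq⟩ := Finset.one_lt_card.1 h2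
    simp only [Finset.mem_filter] at hp hq
    have : b₀ ∈ Finset.univ.filter fun b => I p b ∧ I q b := by
      simp [hp.2, hq.2]
    have hpos : 0 < (Finset.univ.filter fun b => I p b ∧ I q b).card :=
      Finset.card_pos.2 ⟨b₀, this⟩
    rw [hLpq p q hpq] at hpos
    omega
  -- flags
  have hflag : Fintype.card P * r₀ = Fintype.card B * k := by
    have h1 : ∑ p : P, ∑ b : B, (if I p b then 1 else 0) = Fintype.card P * r₀ := by
      calc ∑ p : P, ∑ b : B, (if I p b then 1 else 0)
          = ∑ _p : P, r₀ :=
            Finset.sum_congr rfl (fun p _ => by rw [← Finset.card_filter]; exact hRp p)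
        _ = Fintype.card P * r₀ := by simp [mul_comm]
    have h2 : ∑ b : B, ∑ p : P, (if I p b then 1 else 0) = Fintype.card B * k := by
      calc ∑ b : B, ∑ p : P, (if I p b then 1 else 0)
          = ∑ _b : B, k :=
            Finset.sum_congr rfl (fun b _ => by rw [← Finset.card_filter]; exact hKb b)
        _ = Fintype.card B * k := by simp [mul_comm]
    rw [← h1, ← h2, Finset.sum_comm]
  have hrk : r₀ = k := by
    rw [hPB] at hflag
    exact Nat.eq_of_mul_eq_mul_left hPpos hflag
  rw [hrk] at hRp
  -- s3 : (card P - 1) * l = k * (k - 1)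
  have hs3 : (Fintype.card P - 1) * l = k * (k - 1) := by
    obtain ⟨p₀⟩ := ‹Nonempty P›
    have h1 : ∑ q ∈ Finset.univ.erase p₀, ∑ b : B, (if I p₀ b ∧ I q b then 1 else 0)
        = (Fintype.card P - 1) * l := by
      calc ∑ q ∈ Finset.univ.erase p₀, ∑ b : B, (if I p₀ b ∧ I q b then 1 else 0)
          = ∑ _q ∈ Finset.univ.erase p₀, l := by
            apply Finset.sum_congr rfl
            intro q hq
            rw [← Finset.card_filter]
            exact hLpq p₀ q (Finset.ne_of_mem_erase hq).symm
        _ = (Fintype.card P - 1) * l := by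
            simp [Finset.card_erase_of_mem, mul_comm]
    have h2 : ∑ b : B, ∑ q ∈ Finset.univ.erase p₀, (if I p₀ b ∧ I q b then 1 else 0)
        = k * (k - 1) := by
      calc ∑ b : B, ∑ q ∈ Finset.univ.erase p₀, (if I p₀ b ∧ I q b then 1 else 0)
          = ∑ b : B, (if I p₀ b then k - 1 else 0) := by
            apply Finset.sum_congr rfl
            intro b _
            by_cases hb : I p₀ b
            · simp only [hb, true_and, if_true]
              rw [erase_count (fun q => I q b) p₀ hb, hKb b]
            · simp [hb]
        _ = ∑ b ∈ Finset.univ.filter (fun b => I p₀ b), (k - 1) := by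
            rw [Finset.sum_filter]
        _ = k * (k - 1) := by
            rw [Finset.sum_const, hRp p₀]; simp
    rw [← h1, ← h2, Finset.sum_comm]
  -- intersection counts
  set n : B → ℕ := fun b => (Finset.univ.filter fun p => I p b₀ ∧ I p b).card with hn
  -- s4
  have hs4 : ∑ b ∈ Finset.univ.erase b₀, n b = k * (k - 1) := by
    have h1 : ∑ b ∈ Finset.univ.erase b₀, ∑ p : P, (if I p b₀ ∧ I p b then 1 else 0)
        = ∑ b ∈ Finset.univ.erase b₀, n b := by
      apply Finset.sum_congr rfl
      intro b _
      rw [← Finset.card_filter]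
    have h2 : ∑ p : P, ∑ b ∈ Finset.univ.erase b₀, (if I p b₀ ∧ I p b then 1 else 0)
        = k * (k - 1) := by
      calc ∑ p : P, ∑ b ∈ Finset.univ.erase b₀, (if I p b₀ ∧ I p b then 1 else 0)
          = ∑ p : P, (if I p b₀ then k - 1 else 0) := by
            apply Finset.sum_congr rfl
            intro p _
            by_cases hp : I p b₀
            · simp only [hp, true_and, if_true]
              rw [erase_count (fun b => I p b) b₀ hp, hRp p]
            · simp [hp]
        _ = ∑ p ∈ Finset.univ.filter (fun p => I p b₀), (k - 1) := by
            rw [Finset.sum_filter]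
        _ = k * (k - 1) := by
            rw [Finset.sum_const, hKb b₀]; simp
    rw [← h1, Finset.sum_comm]
    exact h2
  -- s5
  have hs5 : ∑ b ∈ Finset.univ.erase b₀, n b * (n b - 1) = k * (k - 1) * (l - 1) := by
    have h1 : ∀ b : B, ∑ p : P, ∑ q ∈ Finset.univ.erase p,
        (if (I p b₀ ∧ I p b) ∧ (I q b₀ ∧ I q b) then 1 else 0) = n b * (n b - 1) := by
      intro b
      calc ∑ p : P, ∑ q ∈ Finset.univ.erase p,
            (if (I p b₀ ∧ I p b) ∧ (I q b₀ ∧ I q b) then 1 else 0)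
          = ∑ p : P, (if I p b₀ ∧ I p b then n b - 1 else 0) := by
            apply Finset.sum_congr rfl
            intro p _
            by_cases hp : I p b₀ ∧ I p b
            · simp only [hp, true_and, if_true]
              exact erase_count (fun q => I q b₀ ∧ I q b) p hp
            · simp [hp]
        _ = ∑ p ∈ Finset.univ.filter (fun p => I p b₀ ∧ I p b), (n b - 1) := by
            rw [Finset.sum_filter]
        _ = n b * (n b - 1) := by
            rw [Finset.sum_const]; simp [hn]
    have h2 : ∑ p : P, ∑ q ∈ Finset.univ.erase p, ∑ b ∈ Finset.univ.erase b₀,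
        (if (I p b₀ ∧ I p b) ∧ (I q b₀ ∧ I q b) then 1 else 0) = k * (k - 1) * (l - 1) := by
      calc ∑ p : P, ∑ q ∈ Finset.univ.erase p, ∑ b ∈ Finset.univ.erase b₀,
            (if (I p b₀ ∧ I p b) ∧ (I q b₀ ∧ I q b) then 1 else 0)
          = ∑ p : P, ∑ q ∈ Finset.univ.erase p,
              (if I p b₀ ∧ I q b₀ then l - 1 else 0) := by
            apply Finset.sum_congr rfl
            intro p _
            apply Finset.sum_congr rfl
            intro q hq
            have hqp : q ≠ p := Finset.ne_of_mem_erase hq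
            by_cases hpq : I p b₀ ∧ I q b₀
            · rw [if_pos hpq]
              have he : (∑ b ∈ Finset.univ.erase b₀,
                    if (I p b₀ ∧ I p b) ∧ (I q b₀ ∧ I q b) then 1 else 0)
                  = ∑ b ∈ Finset.univ.erase b₀, if I p b ∧ I q b then 1 else 0 := by
                apply Finset.sum_congr rfl
                intro b _
                congr 1
                apply propext
                constructor
                · rintro ⟨⟨_, h1⟩, ⟨_, h2⟩⟩; exact ⟨h1, h2⟩
                · rintro ⟨h1, h2⟩; exact ⟨⟨hpq.1, h1⟩, ⟨hpq.2, h2⟩⟩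
              rw [he, erase_count (fun b => I p b ∧ I q b) b₀ ⟨hpq.1, hpq.2⟩,
                hLpq p q (Ne.symm hqp)]
            · have : ∀ b : B, ¬ ((I p b₀ ∧ I p b) ∧ (I q b₀ ∧ I q b)) := by
                intro b hb
                exact hpq ⟨hb.1.1, hb.2.1⟩
              simp [this, hpq]
        _ = ∑ p : P, (if I p b₀ then (k - 1) * (l - 1) else 0) := by
            apply Finset.sum_congr rfl
            intro p _
            by_cases hp : I p b₀
            · simp only [hp, true_and, if_true]
              calc ∑ q ∈ Finset.univ.erase p, (if I q b₀ then l - 1 else 0)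
                  = (∑ q ∈ Finset.univ.erase p, if I q b₀ then 1 else 0) * (l-1) := by
                    rw [Finset.sum_mul]
                    apply Finset.sum_congr rfl
                    intro q _
                    by_cases hq : I q b₀ <;> simp [hq]
                _ = (k - 1) * (l - 1) := by
                    rw [erase_count (fun q => I q b₀) p hp, hKb b₀]
            · have : ∀ q : P, ¬ (I p b₀ ∧ I q b₀) := fun q hq => hp hq.1
              simp [this, hp]
        _ = ∑ p ∈ Finset.univ.filter (fun p => I p b₀), ((k - 1) * (l - 1)) := by
            rw [Finset.sum_filter]
        _ = k * (k - 1) * (l - 1) := by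
            rw [Finset.sum_const, hKb b₀]; simp [mul_assoc]
    calc ∑ b ∈ Finset.univ.erase b₀, n b * (n b - 1)
        = ∑ b ∈ Finset.univ.erase b₀, ∑ p : P, ∑ q ∈ Finset.univ.erase p,
            (if (I p b₀ ∧ I p b) ∧ (I q b₀ ∧ I q b) then 1 else 0) :=
          Finset.sum_congr rfl (fun b _ => (h1 b).symm)
      _ = k * (k - 1) * (l - 1) := by
          rw [← h2]
          rw [Finset.sum_comm]
          apply Finset.sum_congr rfl
          intro p _
          rw [Finset.sum_comm]
  -- number of terms
  have hterms : (Finset.univ.erase b₀).card = Fintype.card P - 1 := by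
    rw [Finset.card_erase_of_mem (Finset.mem_univ b₀)]
    simp [hPB]
  -- the variance computation over ℤ
  have hzero : ∑ b ∈ Finset.univ.erase b₀, ((n b : ℤ) - l) ^ 2 = 0 := by
    have e1 : ∑ b ∈ Finset.univ.erase b₀, ((n b : ℤ) - l) ^ 2
        = ∑ b ∈ Finset.univ.erase b₀,
            ((n b : ℤ) * ((n b : ℤ) - 1) + (1 - 2 * l) * (n b : ℤ) + l ^ 2) := by
      apply Finset.sum_congr rfl
      intro b _
      ring
    rw [e1]
    rw [Finset.sum_add_distrib, Finset.sum_add_distrib]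
    have e2 : ∑ b ∈ Finset.univ.erase b₀, (n b : ℤ) * ((n b : ℤ) - 1)
        = (k : ℤ) * ((k : ℤ) - 1) * ((l : ℤ) - 1) := by
      have : ∑ b ∈ Finset.univ.erase b₀, (n b : ℤ) * ((n b : ℤ) - 1)
          = ((∑ b ∈ Finset.univ.erase b₀, n b * (n b - 1) : ℕ) : ℤ) := by
        push_cast
        apply Finset.sum_congr rfl
        intro b _
        rw [← nat_cast_mul_pred]
        push_cast
        ring
      rw [this, hs5]
      rw [Nat.cast_mul, Nat.cast_mul, Nat.cast_sub (by omega : 1 ≤ k),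
        Nat.cast_sub hl1]
      push_cast
      ring
    have e3 : ∑ b ∈ Finset.univ.erase b₀, ((1 : ℤ) - 2 * l) * (n b : ℤ)
        = (1 - 2 * (l : ℤ)) * ((k : ℤ) * ((k : ℤ) - 1)) := by
      rw [← Finset.mul_sum]
      congr 1
      have : ∑ b ∈ Finset.univ.erase b₀, (n b : ℤ)
          = ((∑ b ∈ Finset.univ.erase b₀, n b : ℕ) : ℤ) := by push_cast; rfl
      rw [this, hs4, Nat.cast_mul, Nat.cast_sub (by omega : 1 ≤ k)]
      push_cast
      ring
    have e4 : ∑ _b ∈ Finset.univ.erase b₀, (l : ℤ) ^ 2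
        = ((Fintype.card P : ℤ) - 1) * l ^ 2 := by
      rw [Finset.sum_const, hterms, nsmul_eq_mul,
        Nat.cast_sub (by omega : 1 ≤ Fintype.card P)]
      push_cast
      ring
    rw [e2, e3, e4]
    -- use hs3 : (card P - 1) * l = k * (k-1)
    have e5 : ((Fintype.card P : ℤ) - 1) * l = (k : ℤ) * ((k : ℤ) - 1) := by
      have := hs3
      have : (((Fintype.card P - 1) * l : ℕ) : ℤ) = ((k * (k - 1) : ℕ) : ℤ) := by
        rw [this]
      rwa [Nat.cast_mul, Nat.cast_mul, Nat.cast_sub (by omega : 1 ≤ Fintype.card P),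
        Nat.cast_sub (by omega : 1 ≤ k), Nat.cast_one] at this
    nlinarith [e5]
  -- each term is zero, in particular at b₁
  have hb1 : ((n b₁ : ℤ) - l) ^ 2 = 0 := by
    have hmem : b₁ ∈ Finset.univ.erase b₀ := by
      simp [Finset.mem_erase, Ne.symm hb01]
    have := (Finset.sum_eq_zero_iff_of_nonneg
      (fun b _ => sq_nonneg ((n b : ℤ) - l))).1 hzero b₁ hmem
    exact this
  have hnb1 : (n b₁ : ℤ) = l := by
    have := sq_eq_zero_iff.1 hb1
    linarith
  have : n b₁ = 0 := by
    rw [hn]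
    simp only []
    rw [Finset.card_eq_zero, Finset.filter_eq_empty_iff]
    intro p _
    exact hd p
  rw [this] at hnb1
  simp at hnb1
  omega


section MainProof
variable {P B G : Type*} [Finite P] [Finite B] [Nonempty P] [Nonempty B]
    [Group G] [MulAction G P] [MulAction G B]

theorem main_thm
    (I : P → B → Prop) (v k l : ℕ)
    (hD : (Nat.card P = v ∧ 2 ≤ k ∧ (∀ b : B, Nat.card {p : P // I p b} = k) ∧
      ∀ p q : P, p ≠ q → Nat.card {b : B // I p b ∧ I q b} = l))
    (hnt : 2 < k ∧ k < v)
    (hGI : ∀ (g : G) (p : P) (b : B), I p b ↔ I (g • p) (g • b))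
    (hfaith : ∀ g : G, (∀ p : P, g • p = p) → (∀ b : B, g • b = b) → g = 1)
    (hPT1 : ∀ p₁ p₂ q₁ q₂ : P, p₁ ≠ p₂ → q₁ ≠ q₂ → ∃ g : G, g • p₁ = q₁ ∧ g • p₂ = q₂)
    (hPT4 : ∀ b₁ b₂ b₁' b₂' : B, b₁ ≠ b₂ → b₁' ≠ b₂' → (∃ p, I p b₁ ∧ I p b₂) →
      (∃ p, I p b₁' ∧ I p b₂') → ∃ g : G, g • b₁ = b₁' ∧ g • b₂ = b₂')
    (hrank : ∀ x : B, Nat.card (Quotient (MulAction.orbitRel (MulAction.stabilizer G x) B)) = 3)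
    (hprim : ∀ S : Set (Set B), Setoid.IsPartition S → (∀ (g : G), ∀ s ∈ S, g • s ∈ S) →
      (∀ s ∈ S, ∃ x : B, s = {x}) ∨ S = {Set.univ}) :
    ∃ T : Subgroup G, T.Normal ∧ IsSimpleGroup T ∧
      (∃ x ∈ T, ∃ y ∈ T, x * y ≠ y * x) ∧ Subgroup.centralizer (T : Set G) = ⊥ := by
  classical
  obtain ⟨hv, hk2, hkb, hlp⟩ := hD
  obtain ⟨hk3, hkv⟩ := hnt
  -- nontrivial point set
  haveI hPnt : Nontrivial P := by
    rw [← Finite.one_lt_card_iff_nontrivial]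
    omega
  -- transitivity on points
  have htP : ∀ p q : P, ∃ g : G, g • p = q := by
    intro p q
    by_cases h : p = q
    · exact ⟨1, by rw [h, one_smul]⟩
    · obtain ⟨p', hp'⟩ := exists_ne p
      obtain ⟨q', hq'⟩ := exists_ne q
      obtain ⟨g, h1, _⟩ := hPT1 p p' q q' (Ne.symm hp') (Ne.symm hq')
      exact ⟨g, h1⟩
  -- each block has a point and a non-point
  have hbpt : ∀ b : B, ∃ p, I p b := by
    intro b
    have h0 : 0 < Nat.card {p : P // I p b} := by rw [hkb b]; omega
    obtain ⟨⟨p, hp⟩⟩ := (Nat.card_pos_iff.mp h0).1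
    exact ⟨p, hp⟩
  have hbnpt : ∀ b : B, ∃ p, ¬ I p b := by
    intro b
    by_contra h
    push_neg at h
    have := Nat.card_congr (Equiv.subtypeUnivEquiv h)
    rw [hkb b, hv] at this
    omega
  -- a disjoint pair of blocks exists
  have hdisj : ∃ b₀ b₁ : B, ∀ p, ¬ (I p b₀ ∧ I p b₁) := by
    by_contra h
    push_neg at h
    obtain ⟨b₀⟩ := ‹Nonempty B›
    have h3 := hrank b₀
    by_cases hc : ∃ c : B, c ≠ b₀
    · obtain ⟨c, hcb⟩ := hc
      have hsurj : Function.Surjective (fun i : Bool =>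
          if i then (⟦b₀⟧ : Quotient (MulAction.orbitRel (MulAction.stabilizer G b₀) B))
          else ⟦c⟧) := by
        intro x
        induction x using Quotient.inductionOn with
        | h β =>
          by_cases hβ : β = b₀
          · exact ⟨true, by simp [hβ]⟩
          · refine ⟨false, ?_⟩
            simp only [Bool.false_eq_true, if_false]
            obtain ⟨g, hg1, hg2⟩ := hPT4 b₀ β b₀ c (Ne.symm hβ) (Ne.symm hcb)
              (h b₀ β) (h b₀ c)
            exact Quotient.sound (MulAction.mem_orbit_iff.mpr
              ⟨⟨g, MulAction.mem_stabilizer_iff.mpr hg1⟩, hg2⟩)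
      have hle := Nat.card_le_card_of_surjective _ hsurj
      rw [h3] at hle
      simp [Nat.card_eq_fintype_card] at hle
    · push_neg at hc
      have hsurj : Function.Surjective (fun _ : Unit =>
          (⟦b₀⟧ : Quotient (MulAction.orbitRel (MulAction.stabilizer G b₀) B))) := by
        intro x
        induction x using Quotient.inductionOn with
        | h β => exact ⟨(), by rw [hc β]⟩
      have hle := Nat.card_le_card_of_surjective _ hsurj
      rw [h3] at hle
      simp [Nat.card_eq_fintype_card] at hle
  -- kernel of the action on blocks is trivial
  have hkerB : ∀ g : G, (∀ β : B, g • β = β) → g = 1 := by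
    intro g hg
    by_contra hg1
    have hx : ∃ x : P, g • x ≠ x := by
      by_contra h
      push_neg at h
      exact hg1 (hfaith g h hg)
    obtain ⟨x₀, hx₀⟩ := hx
    obtain ⟨b⟩ := ‹Nonempty B›
    obtain ⟨p, hp⟩ := hbpt b
    obtain ⟨q, hq⟩ := hbnpt b
    have hpq : p ≠ q := fun hh => hq (hh ▸ hp)
    obtain ⟨a, ha1, ha2⟩ := hPT1 x₀ (g • x₀) p q (Ne.symm hx₀) hpq
    have e : a⁻¹ • p = x₀ := by rw [← ha1, inv_smul_smul]
    have hh1 : (a * g * a⁻¹) • p = q := by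
      rw [mul_smul, mul_smul, e, ha2]
    have hh2 : (a * g * a⁻¹) • b = b := by
      rw [mul_smul, mul_smul, hg, smul_inv_smul]
    have := (hGI (a * g * a⁻¹) p b).1 hp
    rw [hh1, hh2] at this
    exact hq this
  -- orbit dichotomy on blocks for normal subgroups
  have horbB : ∀ A : Subgroup G, A.Normal →
      (∀ a ∈ A, ∀ β : B, a • β = β) ∨ (∀ β β' : B, ∃ a ∈ A, a • β = β') := by
    intro A hA
    set S : Set (Set B) := {s | ∃ β, s = sorb A β} with hS
    have hpart : Setoid.IsPartition S := by
      constructor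
      · rintro ⟨β, hβ⟩
        have hm := sorb_refl A (X := B) β
        rw [← hβ] at hm
        exact Set.notMem_empty β hm
      · intro β
        refine ⟨sorb A β, ⟨⟨β, rfl⟩, sorb_refl A β⟩, ?_⟩
        rintro s ⟨⟨γ, rfl⟩, hβγ⟩
        exact (sorb_eq_of_mem hβγ).symm
    have hinv : ∀ g : G, ∀ s ∈ S, g • s ∈ S := by
      rintro g s ⟨β, rfl⟩
      refine ⟨g • β, ?_⟩
      ext y
      rw [Set.mem_smul_set_iff_inv_smul_mem]
      constructor
      · rintro ⟨a, ha, haa⟩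
        refine ⟨g * a * g⁻¹, hA.conj_mem a ha g, ?_⟩
        rw [mul_smul, mul_smul, inv_smul_smul, haa, smul_inv_smul]
      · rintro ⟨a, ha, haa⟩
        refine ⟨g⁻¹ * a * g, by simpa using hA.conj_mem a ha g⁻¹, ?_⟩
        rw [mul_smul, mul_smul, haa]
    rcases hprim S hpart hinv with hsing | huniv
    · left
      intro a ha β
      obtain ⟨x, hx⟩ := hsing (sorb A β) ⟨β, rfl⟩
      have h1 : β ∈ sorb A β := sorb_refl A β
      have h2 : a • β ∈ sorb A β := ⟨a, ha, rfl⟩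
      rw [hx, Set.mem_singleton_iff] at h1 h2
      rw [h2, h1]
    · right
      intro β β'
      have hmem : sorb A β ∈ S := ⟨β, rfl⟩
      rw [huniv, Set.mem_singleton_iff] at hmem
      have : β' ∈ sorb A β := by rw [hmem]; trivial
      exact this
  -- kernel of the action on points is trivial
  have hkerP : ∀ g : G, (∀ x : P, g • x = x) → g = 1 := by
    intro g hg
    set K : Subgroup G := (MulAction.toPermHom G P).ker with hK
    have hKmem : ∀ a : G, a ∈ K ↔ ∀ x : P, a • x = x := by
      intro a
      rw [hK, MonoidHom.mem_ker]
      constructor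
      · intro h x
        have := congrArg (fun (e : Equiv.Perm P) => e x) h
        simpa [MulAction.toPermHom] using this
      · intro h
        ext x
        simpa [MulAction.toPermHom] using h x
    rcases horbB K (MonoidHom.normal_ker _) with htriv | htrans
    · exact hfaith g hg (htriv g ((hKmem g).2 hg))
    · obtain ⟨b₀, b₁, hd⟩ := hdisj
      obtain ⟨a, ha, hab⟩ := htrans b₀ b₁
      obtain ⟨p, hp⟩ := hbpt b₀
      exfalso
      apply hd p
      refine ⟨hp, ?_⟩
      have := (hGI a p b₀).1 hp
      rwa [(hKmem a).1 ha p, hab] at this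
  -- G is finite
  haveI hGfin : Finite G := by
    apply Finite.of_injective (fun g : G => (MulAction.toPerm g : Equiv.Perm P))
    intro g₁ g₂ hgg
    have : ∀ x : P, g₁ • x = g₂ • x := by
      intro x
      have := congrArg (fun (e : Equiv.Perm P) => e x) hgg
      simpa [MulAction.toPerm] using this
    have h1 : (g₂⁻¹ * g₁) = 1 := by
      apply hkerP
      intro x
      rw [mul_smul, this x, inv_smul_smul]
    have := congrArg (fun y => g₂ * y) h1
    simpa [mul_assoc] using this
  -- normal subgroups act transitively on P
  have htrP : ∀ A : Subgroup G, A.Normal → A ≠ ⊥ → ∀ x y : P, ∃ a ∈ A, a • x = y := by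
    intro A hA hAb x y
    have hex : ∃ n₀ ∈ A, n₀ ≠ 1 := by
      by_contra hc
      push_neg at hc
      exact hAb ((Subgroup.eq_bot_iff_forall A).2 hc)
    obtain ⟨n₀, hn₀A, hn₀⟩ := hex
    have hx : ∃ x₀ : P, n₀ • x₀ ≠ x₀ := by
      by_contra hcc
      push_neg at hcc
      exact hn₀ (hkerP n₀ hcc)
    obtain ⟨x₀, hx₀⟩ := hx
    by_cases hxy : x = y
    · exact ⟨1, A.one_mem, by rw [hxy, one_smul]⟩
    · obtain ⟨g, hg1, hg2⟩ := hPT1 x₀ (n₀ • x₀) x y (Ne.symm hx₀) hxy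
      refine ⟨g * n₀ * g⁻¹, hA.conj_mem _ hn₀A g, ?_⟩
      have e : g⁻¹ • x = x₀ := by rw [← hg1, inv_smul_smul]
      rw [mul_smul, mul_smul, e, hg2]
  -- normal subgroups act transitively on B
  have htrB : ∀ A : Subgroup G, A.Normal → A ≠ ⊥ → ∀ β β' : B, ∃ a ∈ A, a • β = β' := by
    intro A hA hAb
    rcases horbB A hA with htriv | htrans
    · exfalso
      have hex : ∃ n₀ ∈ A, n₀ ≠ 1 := by
        by_contra hc
        push_neg at hc
        exact hAb ((Subgroup.eq_bot_iff_forall A).2 hc)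
      obtain ⟨n₀, hn₀A, hn₀⟩ := hex
      exact hn₀ (hkerB n₀ (htriv n₀ hn₀A))
    · exact htrans
  -- symmetric-design contradiction
  have hsym : Nat.card B = Nat.card P → False := by
    intro hcard
    obtain ⟨b₀, b₁, hd⟩ := hdisj
    obtain ⟨p₀⟩ := ‹Nonempty P›
    have hr : ∀ p : P, Nat.card {b : B // I p b} = Nat.card {b : B // I p₀ b} := by
      intro p
      obtain ⟨g, hg⟩ := htP p₀ p
      symm
      apply Nat.card_congr
      refine Equiv.subtypeEquiv (MulAction.toPerm g : Equiv.Perm B) ?_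
      intro b
      have := hGI g p₀ b
      rwa [hg] at this
    exact design_blocks_meet I k l (Nat.card {b : B // I p₀ b}) hk2 hcard hkb hlp hr b₀ b₁ hd
  -- nontrivial G
  haveI hGnt : Nontrivial G := by
    obtain ⟨p, q, hpq⟩ := exists_pair_ne P
    obtain ⟨g, hg⟩ := htP p q
    refine ⟨g, 1, fun h => hpq ?_⟩
    rw [h, one_smul] at hg
    exact hg
  -- minimal normal subgroup
  obtain ⟨N, ⟨hNn, hNb⟩, -, hNmin⟩ := exists_minimal_subgroup
    (fun A : Subgroup G => A.Normal ∧ A ≠ ⊥) ⊤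
    ⟨inferInstance, by
      intro h
      obtain ⟨g, hg⟩ := exists_ne (1 : G)
      have : g ∈ (⊥ : Subgroup G) := h ▸ Subgroup.mem_top g
      exact hg (Subgroup.mem_bot.1 this)⟩
  -- if N were abelian we get a contradiction
  have habel : (∀ x ∈ N, ∀ y ∈ N, x * y = y * x) → False := by
    intro hab
    obtain ⟨β₀⟩ := ‹Nonempty B›
    obtain ⟨p₀⟩ := ‹Nonempty P›
    have htB := htrB N hNn hNb
    have htPn := htrP N hNn hNb
    have hsB : ∀ a ∈ N, a • β₀ = β₀ → a = 1 := by
      intro a ha hfix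
      apply hkerB
      intro β
      obtain ⟨m, hm, hmm⟩ := htB β₀ β
      rw [← hmm, ← mul_smul, hab a ha m hm, mul_smul, hfix]
    have hsP : ∀ a ∈ N, a • p₀ = p₀ → a = 1 := by
      intro a ha hfix
      apply hkerP
      intro p
      obtain ⟨m, hm, hmm⟩ := htPn p₀ p
      rw [← hmm, ← mul_smul, hab a ha m hm, mul_smul, hfix]
    have e1 := card_of_regular (htB β₀) hsB
    have e2 := card_of_regular (htPn p₀) hsP
    exact hsym (by rw [← e1, e2])
  have hNnonab : ∃ x ∈ N, ∃ y ∈ N, x * y ≠ y * x := by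
    by_contra hc
    push_neg at hc
    exact habel hc
  -- the centralizer of N is trivial
  have hcent : Subgroup.centralizer (N : Set G) = ⊥ := by
    by_contra hC
    have hCn : (Subgroup.centralizer (N : Set G)).Normal := by
      constructor
      intro c hc g
      rw [Subgroup.mem_centralizer_iff] at hc ⊢
      intro n hn
      have h1 : (g⁻¹ * n * g) ∈ N := by
        have := hNn.conj_mem n hn g⁻¹
        simpa [mul_assoc] using this
      have h := hc _ h1
      calc n * (g * c * g⁻¹) = g * ((g⁻¹ * n * g) * c) * g⁻¹ := by group
        _ = g * (c * (g⁻¹ * n * g)) * g⁻¹ := by rw [h]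
        _ = (g * c * g⁻¹) * n := by group
    obtain ⟨β₀⟩ := ‹Nonempty B›
    obtain ⟨p₀⟩ := ‹Nonempty P›
    have hCtB := htrB _ hCn hC
    have hCtP := htrP _ hCn hC
    have hsB : ∀ a ∈ N, a • β₀ = β₀ → a = 1 := by
      intro a ha hfix
      apply hkerB
      intro β
      obtain ⟨c, hcm, hcc⟩ := hCtB β₀ β
      have hcom : a * c = c * a := Subgroup.mem_centralizer_iff.1 hcm a ha
      rw [← hcc, ← mul_smul, hcom, mul_smul, hfix]
    have hsP : ∀ a ∈ N, a • p₀ = p₀ → a = 1 := by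
      intro a ha hfix
      apply hkerP
      intro p
      obtain ⟨c, hcm, hcc⟩ := hCtP p₀ p
      have hcom : a * c = c * a := Subgroup.mem_centralizer_iff.1 hcm a ha
      rw [← hcc, ← mul_smul, hcom, mul_smul, hfix]
    have e1 := card_of_regular (htrB N hNn hNb β₀) hsB
    have e2 := card_of_regular (htrP N hNn hNb p₀) hsP
    exact hsym (by rw [← e1, e2])
  -- N is simple
  have hNsimple : IsSimpleGroup ↥N := by
    haveI hNnt : Nontrivial ↥N := (Subgroup.nontrivial_iff_ne_bot N).2 hNb
    constructor
    intro H hH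
    by_contra hcon
    push_neg at hcon
    obtain ⟨hHbot, hHtop⟩ := hcon
    set K₀ : Subgroup G := H.map N.subtype with hK₀
    have hK₀le : K₀ ≤ N := by
      rintro x ⟨h, hh, rfl⟩
      exact (h : ↥N).2
    have hK₀bot : K₀ ≠ ⊥ := by
      intro hb
      apply hHbot
      rw [Subgroup.eq_bot_iff_forall]
      intro x hx
      have hm : (N.subtype x) ∈ K₀ := ⟨x, hx, rfl⟩
      rw [hb, Subgroup.mem_bot] at hm
      exact Subtype.ext hm
    have hK₀ne : K₀ ≠ N := by
      intro he
      apply hHtop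
      rw [Subgroup.eq_top_iff']
      intro x
      have hm : (x : G) ∈ K₀ := by rw [he]; exact x.2
      obtain ⟨y, hy, hyx⟩ := hm
      have : y = x := Subtype.ext hyx
      rwa [← this]
    have hK₀norm : NormalIn N K₀ := by
      intro n hn x hx
      obtain ⟨y, hy, rfl⟩ := hx
      exact ⟨_, hH.conj_mem y hy ⟨n, hn⟩, rfl⟩
    obtain ⟨T, ⟨hTle, hTbot, hTnorm⟩, hTleK₀, hTmin⟩ := exists_minimal_subgroup
      (fun K : Subgroup G => K ≤ N ∧ K ≠ ⊥ ∧ NormalIn N K) K₀ ⟨hK₀le, hK₀bot, hK₀norm⟩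
    have hcjN : ∀ g : G, cjSub g N = N := fun g => cjSub_eq_of_normal hNn
    have hcjT : ∀ g : G, cjSub g T ≤ N ∧ cjSub g T ≠ ⊥ ∧ NormalIn N (cjSub g T) := by
      intro g
      refine ⟨?_, cjSub_ne_bot hTbot, normalIn_cjSub hNn hTnorm g⟩
      rw [← hcjN g]
      exact cjSub_le_cjSub hTle
    have hTmin' : ∀ (g : G) (K : Subgroup G), K ≤ N → K ≠ ⊥ → NormalIn N K →
        K ≤ cjSub g T → K = cjSub g T := by
      intro g K h1 h2 h3 h4
      have h5 : cjSub g⁻¹ K ≤ T := by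
        have := cjSub_le_cjSub (g := g⁻¹) h4
        rwa [cjSub_cjSub, inv_mul_cancel, cjSub_one] at this
      have h6 : cjSub g⁻¹ K ≤ N := by
        rw [← hcjN g⁻¹]
        exact cjSub_le_cjSub h1
      have h7 := hTmin (cjSub g⁻¹ K) ⟨h6, cjSub_ne_bot h2, normalIn_cjSub hNn h3 g⁻¹⟩ h5
      have h8 := congrArg (cjSub g) h7
      rwa [cjSub_cjSub, mul_inv_cancel, cjSub_one] at h8
    have hdist : ∀ g h : G, cjSub g T ≠ cjSub h T →
        ∀ x ∈ cjSub g T, ∀ y ∈ cjSub h T, x * y = y * x := by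
      intro g h hne x hx y hy
      have hinf : cjSub g T ⊓ cjSub h T = ⊥ := by
        by_contra hib
        have h1 : cjSub g T ⊓ cjSub h T ≤ N := le_trans inf_le_left (hcjT g).1
        have h2 := normalIn_inf (hcjT g).2.2 (hcjT h).2.2
        have e1 := hTmin' g _ h1 hib h2 inf_le_left
        have e2 := hTmin' h _ h1 hib h2 inf_le_right
        exact hne (e1.symm.trans e2)
      have hc1 : x * y * x⁻¹ * y⁻¹ ∈ cjSub h T := by
        have hxN : x ∈ N := (hcjT g).1 hx
        have hm := (hcjT h).2.2 x hxN y hy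
        exact (cjSub h T).mul_mem hm ((cjSub h T).inv_mem hy)
      have hc2 : x * y * x⁻¹ * y⁻¹ ∈ cjSub g T := by
        have hyN : y ∈ N := (hcjT h).1 hy
        have h1 : y * x⁻¹ * y⁻¹ ∈ cjSub g T :=
          (hcjT g).2.2 y hyN x⁻¹ ((cjSub g T).inv_mem hx)
        have hm := (cjSub g T).mul_mem hx h1
        convert hm using 1
        group
      have hm : x * y * x⁻¹ * y⁻¹ ∈ cjSub g T ⊓ cjSub h T := ⟨hc2, hc1⟩
      rw [hinf, Subgroup.mem_bot] at hm
      have : x * y * x⁻¹ * y⁻¹ = 1 := hm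
      exact commutatorElement_eq_one_iff_mul_comm.1 (by rwa [commutatorElement_def])
    -- sup of all conjugates is N
    have hsupN : (⨆ g : G, cjSub g T) = N := by
      have hle : (⨆ g : G, cjSub g T) ≤ N := iSup_le (fun g => (hcjT g).1)
      have hnorm : (⨆ g : G, cjSub g T).Normal := by
        constructor
        intro x hx g
        refine Subgroup.iSup_induction _ (C := fun z => g * z * g⁻¹ ∈ ⨆ g' : G, cjSub g' T)
          hx ?_ ?_ ?_
        · intro i z hz
          have h1 : g * z * g⁻¹ ∈ cjSub g (cjSub i T) := cjSub_mem hz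
          rw [cjSub_cjSub] at h1
          exact (le_iSup (fun g' : G => cjSub g' T) (g * i)) h1
        · simpa using (⨆ g' : G, cjSub g' T).one_mem
        · intro z w hz hw
          have := (⨆ g' : G, cjSub g' T).mul_mem hz hw
          convert this using 1
          group
      have hbot : (⨆ g : G, cjSub g T) ≠ ⊥ := by
        intro hb
        apply hTbot
        rw [eq_bot_iff]
        intro x hx
        have h1 : x ∈ cjSub (1 : G) T := by rw [cjSub_one]; exact hx
        have h2 := (le_iSup (fun g : G => cjSub g T) 1) h1
        rw [hb] at h2
        exact h2
      exact hNmin _ ⟨hnorm, hbot⟩ hle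
    by_cases hr1 : ∀ g : G, cjSub g T = T
    · have hTnormal : T.Normal := by
        constructor
        intro x hx g
        have := cjSub_mem (g := g) hx
        rwa [hr1 g] at this
      have hTN := hNmin T ⟨hTnormal, hTbot⟩ hTle
      exact hK₀ne (le_antisymm hK₀le (hTN ▸ hTleK₀))
    push_neg at hr1
    obtain ⟨g₂, hg₂⟩ := hr1
    have hTact : ∃ t ∈ T, ∃ x : P, t • x ≠ x := by
      have hex : ∃ t ∈ T, t ≠ 1 := by
        by_contra hc
        push_neg at hc
        exact hTbot ((Subgroup.eq_bot_iff_forall T).2 hc)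
      obtain ⟨t, ht, ht1⟩ := hex
      refine ⟨t, ht, ?_⟩
      by_contra hc
      push_neg at hc
      exact ht1 (hkerP t hc)
    have horbfull : ∀ x y : P, x ≠ y → ∃ g : G, ∃ a ∈ cjSub g T, a • x = y := by
      intro x y hxy
      obtain ⟨t, ht, x₁, hx₁⟩ := hTact
      obtain ⟨gg, h1, h2⟩ := hPT1 x₁ (t • x₁) x y (Ne.symm hx₁) hxy
      refine ⟨gg, gg * t * gg⁻¹, cjSub_mem ht, ?_⟩
      have e : gg⁻¹ • x = x₁ := by rw [← h1, inv_smul_smul]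
      rw [mul_smul, mul_smul, e, h2]
    by_cases hsemi : ∀ (g : G), ∀ a ∈ cjSub g T, a ≠ 1 → ∀ x : P, a • x ≠ x
    · -- Case α : all conjugates act semiregularly
      obtain ⟨p₀⟩ := ‹Nonempty P›
      have hordeq : ∀ t ∈ T, t ≠ 1 → ∀ t' ∈ T, t' ≠ 1 → orderOf t = orderOf t' := by
        intro t ht ht1 t' ht' ht1'
        have hx : t • p₀ ≠ p₀ := hsemi 1 t (by rw [cjSub_one]; exact ht) ht1 p₀
        have hx' : t' • p₀ ≠ p₀ := hsemi 1 t' (by rw [cjSub_one]; exact ht') ht1' p₀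
        obtain ⟨g, hg1, hg2⟩ := hPT1 p₀ (t • p₀) p₀ (t' • p₀) (Ne.symm hx) (Ne.symm hx')
        have huT : g * t * g⁻¹ ∈ cjSub g T := cjSub_mem ht
        set u := g * t * g⁻¹ with hu
        have hup : u • p₀ = t' • p₀ := by
          have e : g⁻¹ • p₀ = p₀ := by rw [← hg1, inv_smul_smul, hg1]
          rw [hu, mul_smul, mul_smul, e, hg2]
        have hordu : orderOf u = orderOf t := by
          rw [hu]
          simpa [MulAut.conj_apply] using
            orderOf_injective (MulAut.conj g).toMonoidHom (MulAut.conj g).injective t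
        by_cases hgT : cjSub g T = T
        · have huT' : u ∈ T := hgT ▸ huT
          have h1 : (u⁻¹ * t') • p₀ = p₀ := by rw [mul_smul, ← hup, inv_smul_smul]
          have h2 : u⁻¹ * t' ∈ T := T.mul_mem (T.inv_mem huT') ht'
          have h3 : u⁻¹ * t' = 1 := by
            by_contra hne
            exact hsemi 1 _ (by rw [cjSub_one]; exact h2) hne p₀ h1
          have h4 : t' = u := by
            have := congrArg (fun z => u * z) h3
            simpa [mul_assoc] using this
          rw [h4, hordu]
        · have hcomm : u * t' = t' * u :=
            hdist g 1 (by rw [cjSub_one]; exact hgT) u huT t' (by rw [cjSub_one]; exact ht')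
          have hpow : ∀ n : ℕ, u ^ n • p₀ = t' ^ n • p₀ := by
            intro n
            induction n with
            | zero => simp
            | succ m ihm =>
              calc u ^ (m + 1) • p₀ = (u * u ^ m) • p₀ := by rw [← pow_succ']
                _ = u • (u ^ m • p₀) := mul_smul u (u ^ m) p₀
                _ = u • (t' ^ m • p₀) := by rw [ihm]
                _ = (u * t' ^ m) • p₀ := (mul_smul u (t' ^ m) p₀).symm
                _ = (t' ^ m * u) • p₀ := by rw [(Commute.pow_right hcomm m).eq]
                _ = t' ^ m • (u • p₀) := mul_smul (t' ^ m) u p₀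
                _ = t' ^ m • (t' • p₀) := by rw [hup]
                _ = (t' ^ m * t') • p₀ := (mul_smul (t' ^ m) t' p₀).symm
                _ = t' ^ (m + 1) • p₀ := by rw [← pow_succ]
          have h1 : u ^ orderOf t' • p₀ = p₀ := by
            rw [hpow, pow_orderOf_eq_one, one_smul]
          have h2 : u ^ orderOf t' = 1 := by
            by_contra hne
            exact hsemi g _ (pow_mem huT _) hne p₀ h1
          have h3 : orderOf u ∣ orderOf t' := orderOf_dvd_of_pow_eq_one h2
          have h4 : t' ^ orderOf u • p₀ = p₀ := by
            rw [← hpow, pow_orderOf_eq_one, one_smul]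
          have h5 : t' ^ orderOf u = 1 := by
            by_contra hne
            exact hsemi 1 _ (by rw [cjSub_one]; exact pow_mem ht' _) hne p₀ h4
          have h6 : orderOf t' ∣ orderOf u := orderOf_dvd_of_pow_eq_one h5
          rw [← hordu]
          exact Nat.dvd_antisymm h3 h6
      obtain ⟨t₀, ht₀, ht₀1⟩ : ∃ t₀ ∈ T, t₀ ≠ 1 := by
        by_contra hc
        push_neg at hc
        exact hTbot ((Subgroup.eq_bot_iff_forall T).2 hc)
      have hopos : 0 < orderOf t₀ := orderOf_pos t₀
      have hone : orderOf t₀ ≠ 1 := fun h => ht₀1 (orderOf_eq_one_iff.1 h)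
      have ho2 : 2 ≤ orderOf t₀ := by omega
      set o := orderOf t₀ with hodef
      set p := o.minFac with hpdef
      have hp : p.Prime := Nat.minFac_prime (by omega)
      have hdvd : p ∣ o := Nat.minFac_dvd o
      have hs : orderOf (t₀ ^ (o / p)) = p := by
        rw [orderOf_pow]
        have hg1 : Nat.gcd o (o / p) = o / p := Nat.gcd_eq_right (Nat.div_dvd_of_dvd hdvd)
        rw [← hodef, hg1]
        exact Nat.div_div_self hdvd (by omega)
      have hsne : t₀ ^ (o / p) ≠ 1 := by
        intro he
        rw [he, orderOf_one] at hs
        exact hp.one_lt.ne hs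
      have hop : o = p := by
        have := hordeq t₀ ht₀ ht₀1 _ (pow_mem ht₀ (o / p)) hsne
        rw [hs] at this
        exact this
      have hallp : ∀ t ∈ T, t ≠ 1 → orderOf t = p := by
        intro t ht ht1
        rw [hordeq t ht ht1 t₀ ht₀ ht₀1, ← hodef, hop]
      have hpg : IsPGroup p ↥T := by
        intro t
        by_cases ht1 : (t : G) = 1
        · refine ⟨0, ?_⟩
          have he : t = 1 := Subtype.ext (by simpa using ht1)
          simp [he]
        · refine ⟨1, ?_⟩
          have h1 : orderOf (t : G) = p := hallp t t.2 ht1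
          have h2 : orderOf t = p := by
            rw [← orderOf_injective T.subtype T.subtype_injective t]
            exact h1
          rw [pow_one, ← h2]
          exact pow_orderOf_eq_one t
      haveI : Fact p.Prime := ⟨hp⟩
      haveI : Nontrivial ↥T := (Subgroup.nontrivial_iff_ne_bot T).2 hTbot
      haveI hcnt := hpg.center_nontrivial
      obtain ⟨z, hz1⟩ := exists_ne (1 : ↥(Subgroup.center ↥T))
      set zg : G := ((z : ↥T) : G) with hzg
      have hzgT : zg ∈ T := (z : ↥T).2
      have hzg1 : zg ≠ 1 := by
        intro h
        exact hz1 (Subtype.ext (Subtype.ext h))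
      have hNle : N ≤ Subgroup.centralizer ({zg} : Set G) := by
        rw [← hsupN]
        apply iSup_le
        intro g x hx
        rw [Subgroup.mem_centralizer_iff]
        intro w hw
        rw [Set.mem_singleton_iff] at hw
        subst hw
        by_cases hgT : cjSub g T = T
        · have hxT : x ∈ T := hgT ▸ hx
          have hzc := Subgroup.mem_center_iff.1 z.2 ⟨x, hxT⟩
          have := congrArg (fun (w : ↥T) => (w : G)) hzc
          simpa using this.symm
        · exact hdist 1 g (by rw [cjSub_one]; exact fun he => hgT he.symm) zg
            (by rw [cjSub_one]; exact hzgT) x hx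
      have hzC : zg ∈ Subgroup.centralizer (N : Set G) := by
        rw [Subgroup.mem_centralizer_iff]
        intro h hh
        have := Subgroup.mem_centralizer_iff.1 (hNle hh) zg (Set.mem_singleton zg)
        exact this.symm
      exact hzg1 (Subgroup.mem_bot.1 (hcent ▸ hzC))
    · -- Case β : some conjugate element fixes a point
      push_neg at hsemi
      obtain ⟨g₁, τ, hτmem, hτ1, x, hτx⟩ := hsemi
      set T₁ := cjSub g₁ T with hT₁
      set M₁ : Subgroup G := ⨆ (g : G) (_ : cjSub g T ≠ T₁), cjSub g T with hM₁
      have hgen : ∀ g : G, cjSub g T ≠ T₁ → cjSub g T ≤ M₁ := by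
        intro g hg
        exact le_iSup_of_le g (le_iSup (fun _ : cjSub g T ≠ T₁ => cjSub g T) hg)
      have hM₁c : ∀ m ∈ M₁, ∀ s ∈ T₁, m * s = s * m := by
        intro m hm s hs
        have hle : M₁ ≤ Subgroup.centralizer (T₁ : Set G) := by
          apply iSup_le
          intro g
          apply iSup_le
          intro hne x' hx'
          rw [Subgroup.mem_centralizer_iff]
          intro s' hs'
          exact hdist g₁ g (fun he => hne he.symm) s' hs' x' hx'
        exact (Subgroup.mem_centralizer_iff.1 (hle hm) s hs).symm
      have hT₂ : ∃ g', cjSub g' T ≠ T₁ := by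
        by_cases he : T₁ = T
        · exact ⟨g₂, by rw [he]; exact hg₂⟩
        · exact ⟨1, by rw [cjSub_one]; exact fun h => he h.symm⟩
      obtain ⟨g₃, hg₃⟩ := hT₂
      have hM₁b : M₁ ≠ ⊥ := by
        intro hb
        apply cjSub_ne_bot hTbot (g := g₃)
        rw [eq_bot_iff]
        intro y hy
        have h1 : y ∈ M₁ := hgen g₃ hg₃ hy
        rw [hb] at h1
        exact h1
      set F : Set P := {y | τ • y = y} with hF
      have hxF : x ∈ F := hτx
      have hFne : F ≠ Set.univ := by
        intro he
        apply hτ1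
        apply hkerP
        intro y
        have : y ∈ F := he ▸ Set.mem_univ y
        exact this
      have hMF : ∀ m ∈ M₁, ∀ y ∈ F, m • y ∈ F := by
        intro m hm y hy
        have hc := hM₁c m hm τ hτmem
        show τ • (m • y) = m • y
        have hy' : τ • y = y := hy
        rw [← mul_smul, ← hc, mul_smul, hy']
      have hM₁le : ∀ n ∈ N, M₁ ≤ cjSub n M₁ := by
        intro n hn
        apply iSup_le
        intro g
        apply iSup_le
        intro hne
        have hT₁fix : cjSub n T₁ = T₁ := cjSub_eq_of_normalIn (hcjT g₁).2.2 hn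
        have h1 : cjSub (n⁻¹ * g) T ≠ T₁ := by
          intro he
          apply hne
          have h2 := congrArg (cjSub n) he
          rw [cjSub_cjSub, mul_inv_cancel_left, hT₁fix] at h2
          exact h2
        have h2 : cjSub (n⁻¹ * g) T ≤ M₁ := hgen _ h1
        have h3 := cjSub_le_cjSub (g := n) h2
        rw [cjSub_cjSub, mul_inv_cancel_left] at h3
        exact h3
      have hM₁conj : ∀ n ∈ N, ∀ m ∈ M₁, n * m * n⁻¹ ∈ M₁ := by
        intro n hn m hm
        have h1 : M₁ ≤ cjSub n⁻¹ M₁ := hM₁le n⁻¹ (inv_mem hn)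
        have h2 := cjSub_le_cjSub (g := n) h1
        rw [cjSub_cjSub, mul_inv_cancel, cjSub_one] at h2
        exact h2 (cjSub_mem hm)
      by_cases hFone : ∀ y ∈ F, y = x
      · have hMfix : ∀ m ∈ M₁, m • x = x := fun m hm => hFone _ (hMF m hm x hxF)
        have hMall : ∀ m ∈ M₁, ∀ y : P, m • y = y := by
          intro m hm y
          obtain ⟨n, hn, hny⟩ := htrP N hNn hNb x y
          have h1 : n⁻¹ * m * n ∈ M₁ := by
            have := hM₁conj n⁻¹ (inv_mem hn) m hm
            simpa using this
          have h2 := hMfix _ h1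
          calc m • y = m • (n • x) := by rw [hny]
            _ = (m * n) • x := by rw [mul_smul]
            _ = (n * (n⁻¹ * m * n)) • x := by rw [show m * n = n * (n⁻¹ * m * n) by group]
            _ = n • ((n⁻¹ * m * n) • x) := by rw [mul_smul]
            _ = n • x := by rw [h2]
            _ = y := hny
        apply hM₁b
        rw [Subgroup.eq_bot_iff_forall]
        intro m hm
        exact hkerP m (hMall m hm)
      · push_neg at hFone
        obtain ⟨y, hyF, hyx⟩ := hFone
        by_cases hT₁tr : ∀ z w : P, ∃ s ∈ T₁, s • z = w
        · have htrall : ∀ g : G, ∀ z w : P, ∃ s ∈ cjSub g T, s • z = w := by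
            intro g z w
            have he : cjSub (g * g₁⁻¹) T₁ = cjSub g T := by
              rw [hT₁, cjSub_cjSub, inv_mul_cancel_right]
            obtain ⟨s, hs, hss⟩ := hT₁tr ((g * g₁⁻¹)⁻¹ • z) ((g * g₁⁻¹)⁻¹ • w)
            refine ⟨(g * g₁⁻¹) * s * (g * g₁⁻¹)⁻¹, ?_, ?_⟩
            · rw [← he]
              exact cjSub_mem hs
            · rw [mul_smul, mul_smul, hss, smul_inv_smul]
          have hfixfull : ∀ z w : P, z ≠ w →
              ∃ g : G, ∃ a ∈ cjSub g T, a ≠ 1 ∧ a • z = z ∧ a • w = w := by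
            intro z w hzw
            obtain ⟨gg, h1, h2⟩ := hPT1 x y z w (Ne.symm hyx) hzw
            refine ⟨gg * g₁, gg * τ * gg⁻¹, ?_, ?_, ?_, ?_⟩
            · rw [← cjSub_cjSub]
              exact cjSub_mem hτmem
            · intro he
              apply hτ1
              have := congrArg (fun z' => gg⁻¹ * z' * gg) he
              simpa [mul_assoc] using this
            · have e : gg⁻¹ • z = x := by rw [← h1, inv_smul_smul]
              rw [mul_smul, mul_smul, e, hτx, h1]
            · have e : gg⁻¹ • w = y := by rw [← h2, inv_smul_smul]
              have hyF' : τ • y = y := hyF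
              rw [mul_smul, mul_smul, e, hyF', h2]
          obtain ⟨z₀, w₀, hz₀w₀⟩ := exists_pair_ne P
          obtain ⟨g₄, a, haT, ha1, haz, _⟩ := hfixfull z₀ w₀ hz₀w₀
          have hT₅ : ∃ g₅, cjSub g₅ T ≠ cjSub g₄ T := by
            by_cases he : cjSub g₄ T = T
            · exact ⟨g₂, by rw [he]; exact hg₂⟩
            · exact ⟨1, by rw [cjSub_one]; exact fun h => he h.symm⟩
          obtain ⟨g₅, hg₅⟩ := hT₅
          apply ha1
          apply hkerP
          intro w
          obtain ⟨s, hs, hss⟩ := htrall g₅ z₀ w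
          have hcomm := hdist g₄ g₅ (fun he => hg₅ he.symm) a haT s hs
          rw [← hss, ← mul_smul, hcomm, mul_smul, haz]
        · push_neg at hT₁tr
          obtain ⟨z₁, w₁, hz₁⟩ := hT₁tr
          have hρn : ∀ z : P, sorb T₁ z ≠ Set.univ := by
            intro z he
            have h1 : z₁ ∈ sorb T₁ z := he ▸ Set.mem_univ z₁
            have h2 : sorb T₁ z₁ = sorb T₁ z := sorb_eq_of_mem h1
            have h3 : w₁ ∈ sorb T₁ z₁ := by rw [h2, he]; trivial
            obtain ⟨s, hs, hss⟩ := h3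
            exact hz₁ s hs hss
          have hμn : ∀ z : P, sorb M₁ z ≠ Set.univ := by
            intro z he
            have hsub : sorb M₁ x ⊆ F := by
              rintro w ⟨m, hm, rfl⟩
              exact hMF m hm x hxF
            have h1 : x ∈ sorb M₁ z := he ▸ Set.mem_univ x
            have h2 : sorb M₁ x = sorb M₁ z := sorb_eq_of_mem h1
            apply hFne
            apply Set.eq_univ_of_univ_subset
            calc Set.univ = sorb M₁ z := he.symm
              _ = sorb M₁ x := h2.symm
              _ ⊆ F := hsub
          have hcov : ∀ z w : P, w ∈ sorb T₁ z ∨ w ∈ sorb M₁ z := by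
            intro z w
            by_cases hzw : z = w
            · left
              rw [← hzw]
              exact sorb_refl T₁ z
            · obtain ⟨g, a, hag, haa⟩ := horbfull z w hzw
              by_cases he : cjSub g T = T₁
              · left
                exact ⟨a, he ▸ hag, haa⟩
              · right
                exact ⟨a, hgen g he hag, haa⟩
          exact cover_contra (fun z => sorb T₁ z) (fun z => sorb M₁ z)
            (sorb_refl T₁) (fun h => sorb_eq_of_mem h) (sorb_refl M₁)
            (fun h => sorb_eq_of_mem h) hcov hρn hμn
  exact ⟨N, hNn, hNsimple, hNnonab, hcent⟩


end MainProof

/-- If a non-trivial 2-design is `G`-pairwise transitive and `G` has rank 3 and is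
primitive on blocks, then `G` is almost simple. -/
theorem rank_three_primitive_implies_almost_simple
    {P B G : Type*} [Finite P] [Finite B] [Nonempty P] [Nonempty B]
    [Group G] [MulAction G P] [MulAction G B]
    (I : P → B → Prop) (v k l : ℕ)
    (hD : Is2Design I v k l) (hnt : 2 < k ∧ k < v)
    (hGI : ∀ (g : G) (p : P) (b : B), I p b ↔ I (g • p) (g • b))
    (hfaith : ∀ g : G, (∀ p : P, g • p = p) → (∀ b : B, g • b = b) → g = 1)
    (hPT : PairwiseTransitive G I)
    (hrank : HasRank G B 3) (hprim : IsPrimitiveOn G B) :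
    IsAlmostSimple G := by
  obtain ⟨hPT1, hPT2, hPT3, hPT4, hPT5⟩ := hPT
  exact main_thm I v k l hD hnt hGI hfaith hPT1 hPT4 hrank.2 hprim.2
end

section
/- Let q be a prime power, f ≥ 2, K = GF(q), V = K^f, and assume q^{f−1} ≥ 3. Let P = V and let B be the set of affine hyperplanes of V (the cosets v + W where W is an (f−1)-dimensional K-subspace of V), with membership as incidence. Let G be any group of permutations of V that maps affine hyperplanes to affine hyperplanes and contains every translation x ↦ x + v (v ∈ V) and every linear map x ↦ Ax with A ∈ SL(f,q). Then D = (P,B,∈) is a non-trivial 2-(q^f, q^{f−1}, (q^{f−1}−1)/(q−1)) design, any two distinct blocks are incident with either 0 or q^{f−2} common points, and D is G-pairwise transitive. -/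
set_option linter.unusedSectionVars false
set_option maxHeartbeats 1000000

open Module Submodule

section Helpers
variable {K : Type*} [Field K] [Fintype K] {f : ℕ}

def aCos (W : Submodule K (Fin f → K)) (x : Fin f → K) : Set (Fin f → K) :=
  {y : Fin f → K | ∃ w ∈ W, y = x + w}

lemma mem_aCos {W : Submodule K (Fin f → K)} {x y : Fin f → K} :
    y ∈ aCos W x ↔ y - x ∈ W := by
  constructor
  · rintro ⟨w, hw, rfl⟩; simpa using hw
  · intro h; exact ⟨y - x, h, by abel⟩

lemma self_mem_aCos {W : Submodule K (Fin f → K)} {x : Fin f → K} : x ∈ aCos W x := by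
  simp [mem_aCos]

lemma aCos_eq_of_mem {W : Submodule K (Fin f → K)} {x p : Fin f → K}
    (hp : p ∈ aCos W x) : aCos W x = aCos W p := by
  rw [mem_aCos] at hp
  ext y
  rw [mem_aCos, mem_aCos]
  constructor
  · intro h; have := W.sub_mem h hp; simpa using this
  · intro h; have := W.add_mem h hp; simpa [sub_add_sub_cancel] using this

lemma aCos_inj {W W' : Submodule K (Fin f → K)} {x x' : Fin f → K}
    (h : aCos W x = aCos W' x') : W = W' ∧ x' - x ∈ W := by
  have hx' : x' - x ∈ W := by
    have : x' ∈ aCos W x := h ▸ self_mem_aCos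
    rwa [mem_aCos] at this
  have hx : x - x' ∈ W' := by
    have : x ∈ aCos W' x' := h ▸ self_mem_aCos
    rwa [mem_aCos] at this
  refine ⟨?_, hx'⟩
  ext w
  constructor
  · intro hw
    have h1 : x + w ∈ aCos W' x' := by rw [← h, mem_aCos]; simpa using hw
    rw [mem_aCos] at h1
    have := W'.sub_mem h1 hx
    simpa using this
  · intro hw
    have h1 : x' + w ∈ aCos W x := by rw [h, mem_aCos]; simpa using hw
    rw [mem_aCos] at h1
    have := W.sub_mem h1 hx'
    simpa using this

lemma card_aCos (W : Submodule K (Fin f → K)) (x : Fin f → K) :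
    Nat.card (aCos W x) = Fintype.card K ^ (finrank K W) := by
  have h1 : aCos W x = (fun w => x + w) '' (W : Set (Fin f → K)) := by
    ext y
    constructor
    · rintro ⟨w, hw, rfl⟩; exact ⟨w, hw, rfl⟩
    · rintro ⟨w, hw, rfl⟩; exact ⟨w, hw, rfl⟩
  have h2 : Nat.card (aCos W x) = Nat.card W := by
    rw [h1, Nat.card_coe_set_eq, Set.ncard_image_of_injective _ (add_right_injective x),
      ← Nat.card_coe_set_eq]
    exact Nat.card_congr (Equiv.refl _)
  have : Fintype W := Fintype.ofFinite _
  rw [h2, Nat.card_eq_fintype_card, card_eq_pow_finrank (K := K) (V := W)]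

-- surjectivity of nonzero functionals
lemma func_surj {V : Type*} [AddCommGroup V] [Module K V] {φ : V →ₗ[K] K} (h : φ ≠ 0) :
    Function.Surjective φ :=
  LinearMap.surjective_of_ne_zero h

lemma finrank_ker_func {V : Type*} [AddCommGroup V] [Module K V] [FiniteDimensional K V]
    {φ : V →ₗ[K] K} (h : φ ≠ 0) :
    finrank K (LinearMap.ker φ) = finrank K V - 1 := by
  have h1 := LinearMap.finrank_range_add_finrank_ker φ
  have h2 : LinearMap.range φ = ⊤ := LinearMap.range_eq_top.mpr (func_surj h)
  rw [h2, finrank_top, finrank_self] at h1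
  omega

-- every hyperplane is a kernel
lemma hyperplane_eq_ker {V : Type*} [AddCommGroup V] [Module K V] [FiniteDimensional K V]
    (W : Submodule K V) (hW : finrank K W + 1 = finrank K V) :
    ∃ φ : V →ₗ[K] K, φ ≠ 0 ∧ LinearMap.ker φ = W := by
  have hq : finrank K (V ⧸ W) = 1 := by
    have := W.finrank_quotient_add_finrank
    omega
  have e : (V ⧸ W) ≃ₗ[K] K := LinearEquiv.ofFinrankEq _ _ (by rw [hq, finrank_self])
  refine ⟨e.toLinearMap ∘ₗ W.mkQ, ?_, ?_⟩
  · intro hc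
    have : Function.Surjective (e.toLinearMap ∘ₗ W.mkQ) :=
      e.surjective.comp (Submodule.mkQ_surjective W)
    obtain ⟨v, hv⟩ := this 1
    rw [hc] at hv
    simpa using hv
  · rw [LinearMap.ker_comp, LinearEquiv.ker, Submodule.comap_bot, Submodule.ker_mkQ]

-- functionals with equal kernels are proportional
lemma prop_of_ker_eq {V : Type*} [AddCommGroup V] [Module K V]
    {φ ψ : V →ₗ[K] K} (hφ : φ ≠ 0) (h : LinearMap.ker φ = LinearMap.ker ψ) :
    ∃ c : K, c ≠ 0 ∧ ψ = c • φ := by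
  obtain ⟨u, hu⟩ := func_surj hφ 1
  by_cases hψ : ψ = 0
  · exfalso
    have : LinearMap.ker ψ = ⊤ := by rw [hψ]; exact LinearMap.ker_zero
    rw [this] at h
    have : φ u = 0 := by
      have : u ∈ LinearMap.ker φ := h ▸ Submodule.mem_top
      simpa using this
    rw [hu] at this; exact one_ne_zero this
  · refine ⟨ψ u, ?_, ?_⟩
    · intro hc
      have hker : u ∈ LinearMap.ker ψ := by simpa using hc
      rw [← h] at hker
      have : φ u = 0 := hker
      rw [hu] at this; exact one_ne_zero this
    · ext x
      have hmem : x - (φ x) • u ∈ LinearMap.ker φ := by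
        simp [LinearMap.mem_ker, hu, sub_eq_zero]
      rw [h] at hmem
      have hx : ψ x = φ x * ψ u := by
        have := hmem
        simp only [LinearMap.mem_ker, map_sub, map_smul, smul_eq_mul] at this
        exact sub_eq_zero.mp this
      simp only [LinearMap.smul_apply, smul_eq_mul]
      rw [hx]; ring
lemma card_hyperplanes_through (hf : 2 ≤ f) {v : Fin f → K} (hv : v ≠ 0) :
    Nat.card {W : Submodule K (Fin f → K) // finrank K W = f - 1 ∧ v ∈ W} =
      (Fintype.card K ^ (f - 1) - 1) / (Fintype.card K - 1) := by
  classical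
  have hfr : finrank K (Fin f → K) = f := Module.finrank_fin_fun K
  let ev : Module.Dual K (Fin f → K) →ₗ[K] K := LinearMap.applyₗ v
  have hevapp : ∀ φ : Module.Dual K (Fin f → K), ev φ = φ v := fun _ => rfl
  have hev : ev ≠ 0 := by
    intro hc
    apply hv
    rw [← Module.forall_dual_apply_eq_zero_iff (R := K)]
    intro φ
    rw [← hevapp, hc]; rfl
  have hkerev : finrank K (LinearMap.ker ev) = f - 1 := by
    have := finrank_ker_func (K := K) hev
    rwa [Subspace.dual_finrank_eq, hfr] at this
  let A := {φ : Module.Dual K (Fin f → K) // φ ≠ 0 ∧ φ v = 0}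
  let B := {W : Submodule K (Fin f → K) // finrank K W = f - 1 ∧ v ∈ W}
  have hsurj : ∀ W : B, ∃ φ : A,
      LinearMap.ker (φ : Module.Dual K (Fin f → K)) = (W : Submodule K (Fin f → K)) := by
    rintro ⟨W, hW1, hW2⟩
    obtain ⟨φ, hφ, hφker⟩ := hyperplane_eq_ker W (by omega)
    exact ⟨⟨φ, hφ, by rw [← LinearMap.mem_ker, hφker]; exact hW2⟩, hφker⟩
  choose σ hσ using hsurj
  have hbij : Function.Bijective (fun p : Kˣ × B =>
      (⟨(p.1 : K) • (σ p.2 : Module.Dual K (Fin f → K)),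
        smul_ne_zero (Units.ne_zero p.1) (σ p.2).2.1,
        by rw [LinearMap.smul_apply, (σ p.2).2.2, smul_zero]⟩ : A)) := by
    constructor
    · rintro ⟨c, W⟩ ⟨c', W'⟩ hcc
      have h0 : (c : K) • (σ W : Module.Dual K (Fin f → K)) =
          (c' : K) • (σ W' : Module.Dual K (Fin f → K)) := by
        simpa using congrArg Subtype.val hcc
      have hWW' : W = W' := by
        have hk : LinearMap.ker ((c : K) • (σ W : Module.Dual K (Fin f → K))) =
            LinearMap.ker ((c' : K) • (σ W' : Module.Dual K (Fin f → K))) := by rw [h0]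
        rw [LinearMap.ker_smul _ _ (Units.ne_zero c), LinearMap.ker_smul _ _ (Units.ne_zero c'),
          hσ W, hσ W'] at hk
        exact Subtype.ext hk
      subst hWW'
      obtain ⟨u, hu⟩ := func_surj (σ W).2.1 1
      have : (c : K) = (c' : K) := by
        have := congrArg (fun ψ => ψ u) h0
        simpa [hu] using this
      exact Prod.ext (Units.ext this) rfl
    · rintro ⟨φ, hφ, hφv⟩
      have hWmem : finrank K (LinearMap.ker φ) = f - 1 ∧ v ∈ LinearMap.ker φ :=
        ⟨by rw [finrank_ker_func hφ, hfr], hφv⟩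
      set W : B := ⟨LinearMap.ker φ, hWmem⟩ with hWdef
      have hkk : LinearMap.ker (σ W : Module.Dual K (Fin f → K)) = LinearMap.ker φ := hσ W
      obtain ⟨c, hc, hφc⟩ := prop_of_ker_eq (ψ := φ) (σ W).2.1 hkk
      exact ⟨(Units.mk0 c hc, W), by apply Subtype.ext; simpa using hφc.symm⟩
  have hfinDual : Finite (Module.Dual K (Fin f → K)) :=
    Finite.of_injective (fun φ => (φ : (Fin f → K) → K))
      (fun a b h => LinearMap.ext fun x => congrFun h x)
  have hcardA : Nat.card A = Fintype.card K ^ (f - 1) - 1 := by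
    have e : A ≃ {ψ : LinearMap.ker ev // ψ ≠ 0} :=
      ⟨fun φ => ⟨⟨(φ : Module.Dual K (Fin f → K)),
          by rw [LinearMap.mem_ker, hevapp]; exact φ.2.2⟩,
        by simpa using φ.2.1⟩,
        fun ψ => ⟨((ψ : LinearMap.ker ev) : Module.Dual K (Fin f → K)),
          by simpa using ψ.2,
          by rw [← hevapp]; exact (ψ : LinearMap.ker ev).2⟩,
        fun φ => rfl, fun ψ => rfl⟩
    rw [Nat.card_congr e]
    have : Fintype (LinearMap.ker ev) := Fintype.ofFinite _
    rw [Nat.card_eq_fintype_card,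
      Fintype.card_subtype_compl (p := fun ψ : LinearMap.ker ev => ψ = 0),
      Fintype.card_subtype_eq (0 : LinearMap.ker ev)]
    have hc : Fintype.card (LinearMap.ker ev) = Fintype.card K ^ (f - 1) := by
      rw [card_eq_pow_finrank (K := K) (V := LinearMap.ker ev), hkerev]
    rw [hc]
  have hmul : Nat.card A = (Fintype.card K - 1) * Nat.card B := by
    rw [← Nat.card_congr (Equiv.ofBijective _ hbij), Nat.card_prod]
    congr 1
    rw [Nat.card_units, Nat.card_eq_fintype_card]
  have hq1 : 0 < Fintype.card K - 1 := by
    have := Fintype.one_lt_card (α := K)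
    omega
  show Nat.card B = _
  rw [← hcardA, hmul, Nat.mul_div_cancel_left _ hq1]
lemma grow {W T : Submodule K (Fin f → K)} (hle : W ≤ T) {x : Fin f → K} (hx : x ∈ T)
    (hnx : x ∉ W) (hr : finrank K W + 1 = finrank K T) : W ⊔ (K ∙ x) = T := by
  have hx0 : x ≠ 0 := fun h => hnx (h ▸ W.zero_mem)
  have hinf : W ⊓ (K ∙ x) = ⊥ := by
    rw [eq_bot_iff]
    intro y hy
    rw [Submodule.mem_inf] at hy
    obtain ⟨hyW, hyx⟩ := hy
    rw [Submodule.mem_span_singleton] at hyx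
    obtain ⟨c, rfl⟩ := hyx
    rcases eq_or_ne c 0 with rfl | hc
    · simp
    · exfalso
      apply hnx
      have := W.smul_mem c⁻¹ hyW
      rwa [inv_smul_smul₀ hc] at this
  have hsup : finrank K ↥(W ⊔ (K ∙ x)) = finrank K T := by
    have := Submodule.finrank_sup_add_finrank_inf_eq W (K ∙ x)
    rw [hinf, finrank_bot, finrank_span_singleton hx0] at this
    omega
  exact Submodule.eq_of_le_of_finrank_le
    (sup_le hle ((Submodule.span_singleton_le_iff_mem _ _).mpr hx)) hsup.ge

lemma hyperplanes_sup_inf (hf : 2 ≤ f) {W1 W2 : Submodule K (Fin f → K)}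
    (h1 : finrank K W1 = f - 1) (h2 : finrank K W2 = f - 1) (hne : W1 ≠ W2) :
    W1 ⊔ W2 = ⊤ ∧ finrank K ↥(W1 ⊓ W2) = f - 2 := by
  have hfr : finrank K (Fin f → K) = f := Module.finrank_fin_fun K
  have hlt : W1 < W1 ⊔ W2 := by
    rcases lt_or_eq_of_le (le_sup_left : W1 ≤ W1 ⊔ W2) with h | h
    · exact h
    · exfalso
      have hW2le : W2 ≤ W1 := by rw [h]; exact le_sup_right
      exact hne (Submodule.eq_of_le_of_finrank_le hW2le (by omega)).symm
  have hsup : W1 ⊔ W2 = ⊤ := by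
    apply Submodule.eq_top_of_finrank_eq
    have hlt' := Submodule.finrank_lt_finrank_of_lt hlt
    have hle : finrank K ↥(W1 ⊔ W2) ≤ f := by
      have := Submodule.finrank_le (W1 ⊔ W2)
      rwa [hfr] at this
    omega
  refine ⟨hsup, ?_⟩
  have := Submodule.finrank_sup_add_finrank_inf_eq W1 W2
  rw [hsup, finrank_top, hfr] at this
  omega
lemma exists_det_one_map_basis (b c : Basis (Fin f) K (Fin f → K)) (i : Fin f) :
    ∃ (e : (Fin f → K) ≃ₗ[K] (Fin f → K)) (μ : K), μ ≠ 0 ∧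
      LinearMap.det (e : (Fin f → K) →ₗ[K] (Fin f → K)) = 1 ∧
      (∀ j, j ≠ i → e (b j) = c j) ∧ e (b i) = μ • c i := by
  classical
  let e0 := b.equiv c (Equiv.refl _)
  have hd : IsUnit (LinearMap.det (e0 : (Fin f → K) →ₗ[K] (Fin f → K))) :=
    LinearEquiv.isUnit_det' e0
  set u := hd.unit with hu
  let w : Fin f → Kˣ := fun j => if j = i then u⁻¹ else 1
  let c' := c.unitsSMul w
  let s := c.equiv c' (Equiv.refl _)
  have hs_apply : ∀ j, s (c j) = (w j : K) • c j := by
    intro j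
    rw [Basis.equiv_apply, Equiv.refl_apply, Basis.unitsSMul_apply]
    rfl
  have hdets : LinearMap.det (s : (Fin f → K) →ₗ[K] (Fin f → K)) = ((u⁻¹ : Kˣ) : K) := by
    rw [← LinearMap.det_toMatrix c]
    have hm : LinearMap.toMatrix c c (s : (Fin f → K) →ₗ[K] (Fin f → K)) =
        Matrix.diagonal (fun j => (w j : K)) := by
      ext i' j'
      rw [LinearMap.toMatrix_apply]
      simp only [LinearEquiv.coe_coe]
      rw [hs_apply j', map_smul]
      simp only [Basis.repr_self, Finsupp.smul_single, smul_eq_mul, mul_one,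
        Finsupp.single_apply, Matrix.diagonal]
      rcases eq_or_ne i' j' with rfl | h
      · simp
      · simp [h, Ne.symm h]
    rw [hm, Matrix.det_diagonal]
    simp only [w, apply_ite (Units.val : Kˣ → K), Units.val_one]
    rw [Finset.prod_ite_eq' Finset.univ i (fun _ => ((u⁻¹ : Kˣ) : K))]
    simp
  refine ⟨e0.trans s, ((u⁻¹ : Kˣ) : K), Units.ne_zero _, ?_, ?_, ?_⟩
  · have hcomp : ((e0.trans s : (Fin f → K) ≃ₗ[K] (Fin f → K)) :
        (Fin f → K) →ₗ[K] (Fin f → K)) =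
        (s : (Fin f → K) →ₗ[K] (Fin f → K)) ∘ₗ (e0 : (Fin f → K) →ₗ[K] (Fin f → K)) := rfl
    rw [hcomp, LinearMap.det_comp, hdets]
    rw [← IsUnit.unit_spec hd, ← hu]
    exact Units.inv_mul u
  · intro j hj
    have : e0 (b j) = c j := by rw [Basis.equiv_apply]; rfl
    simp only [LinearEquiv.trans_apply, this, hs_apply]
    simp [w, hj]
  · have : e0 (b i) = c i := by rw [Basis.equiv_apply]; rfl
    simp only [LinearEquiv.trans_apply, this, hs_apply]
    simp [w]
lemma span_val_basis {W : Submodule K (Fin f → K)} {ι : Type*} (bw : Basis ι K W) :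
    span K (Set.range (fun k => (bw k : Fin f → K))) = W := by
  have : (fun k => (bw k : Fin f → K)) = W.subtype ∘ bw := rfl
  rw [this, Set.range_comp, Submodule.span_image, bw.span_eq, Submodule.map_subtype_top]

lemma shapeA (hf : 2 ≤ f) {W : Submodule K (Fin f → K)} (hW : finrank K W = f - 1)
    {x : Fin f → K} (hx : x ∉ W) :
    ∃ b : Basis (Fin f) K (Fin f → K),
      span K (b '' {j : Fin f | (j : ℕ) < f - 1}) = W ∧ b ⟨f - 1, by omega⟩ = x := by
  classical
  have hfr : finrank K (Fin f → K) = f := Module.finrank_fin_fun K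
  let bw : Basis (Fin (f - 1)) K W := Module.finBasisOfFinrankEq K W hW
  let v : Fin f → (Fin f → K) := fun j =>
    if h : (j : ℕ) < f - 1 then (bw ⟨j, h⟩ : Fin f → K) else x
  have himg : v '' {j : Fin f | (j : ℕ) < f - 1} =
      Set.range (fun k => (bw k : Fin f → K)) := by
    ext z
    constructor
    · rintro ⟨j, hj, rfl⟩
      refine ⟨⟨j, hj⟩, ?_⟩
      show _ = v j
      simp only [v]
      have hj' : (j : ℕ) < f - 1 := hj
      rw [dif_pos hj']
    · rintro ⟨k, rfl⟩
      refine ⟨⟨k, by omega⟩, by simpa using k.2, ?_⟩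
      simp only [v]
      rw [dif_pos]
      · simp
  have hspan1 : span K (v '' {j : Fin f | (j : ℕ) < f - 1}) = W := by
    rw [himg, span_val_basis]
  have hlast : v ⟨f - 1, by omega⟩ = x := by simp [v]
  have hgrow : W ⊔ (K ∙ x) = ⊤ := by
    apply grow le_top Submodule.mem_top hx
    rw [hW, finrank_top, hfr]
    omega
  have htop : ⊤ ≤ span K (Set.range v) := by
    rw [← hgrow]
    apply sup_le
    · rw [← hspan1]
      exact Submodule.span_mono (Set.image_subset_range _ _)
    · rw [Submodule.span_singleton_le_iff_mem]
      exact Submodule.subset_span ⟨⟨f - 1, by omega⟩, hlast⟩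
  refine ⟨basisOfTopLeSpanOfCardEqFinrank v htop (by simp [hfr]), ?_, ?_⟩
  · rw [coe_basisOfTopLeSpanOfCardEqFinrank]
    exact hspan1
  · rw [coe_basisOfTopLeSpanOfCardEqFinrank]
    exact hlast

lemma map_span_scaled (e : (Fin f → K) ≃ₗ[K] (Fin f → K)) (b c : Basis (Fin f) K (Fin f → K))
    (i : Fin f) {μ : K} (hμ : μ ≠ 0)
    (h1 : ∀ j, j ≠ i → e (b j) = c j) (h2 : e (b i) = μ • c i) (S : Set (Fin f)) :
    (span K (b '' S)).map (e : (Fin f → K) →ₗ[K] (Fin f → K)) = span K (c '' S) := by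
  rw [Submodule.map_span, ← Set.image_comp]
  apply le_antisymm
  · rw [Submodule.span_le]
    rintro z ⟨j, hj, rfl⟩
    simp only [Function.comp, LinearEquiv.coe_coe]
    rcases eq_or_ne j i with rfl | hji
    · rw [h2]
      exact Submodule.smul_mem _ _ (Submodule.subset_span ⟨j, hj, rfl⟩)
    · rw [h1 j hji]
      exact Submodule.subset_span ⟨j, hj, rfl⟩
  · rw [Submodule.span_le]
    rintro z ⟨j, hj, rfl⟩
    rcases eq_or_ne j i with rfl | hji
    · have : c j = μ⁻¹ • (e (b j)) := by rw [h2, smul_smul, inv_mul_cancel₀ hμ, one_smul]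
      rw [this]
      exact Submodule.smul_mem _ _ (Submodule.subset_span ⟨j, hj, rfl⟩)
    · rw [← h1 j hji]
      exact Submodule.subset_span ⟨j, hj, rfl⟩
lemma shapeB (hf : 2 ≤ f) {W1 W2 : Submodule K (Fin f → K)}
    (h1 : finrank K W1 = f - 1) (h2 : finrank K W2 = f - 1) (hne : W1 ≠ W2) :
    ∃ b : Basis (Fin f) K (Fin f → K),
      span K (b '' {j : Fin f | (j : ℕ) ≠ f - 1}) = W1 ∧
      span K (b '' {j : Fin f | (j : ℕ) ≠ f - 2}) = W2 := by
  classical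
  have hfr : finrank K (Fin f → K) = f := Module.finrank_fin_fun K
  obtain ⟨hsup, hinf⟩ := hyperplanes_sup_inf hf h1 h2 hne
  obtain ⟨w1, hw1W1, hw1W2⟩ := SetLike.not_le_iff_exists.mp
    (fun hle => hne (Submodule.eq_of_le_of_finrank_le hle (by omega)))
  obtain ⟨w2, hw2W2, hw2W1⟩ := SetLike.not_le_iff_exists.mp
    (fun hle => hne (Submodule.eq_of_le_of_finrank_le hle (by omega)).symm)
  have hw1int : w1 ∉ W1 ⊓ W2 := fun h => hw1W2 h.2
  have hw2int : w2 ∉ W1 ⊓ W2 := fun h => hw2W1 h.1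
  let bint : Basis (Fin (f - 2)) K ↥(W1 ⊓ W2) := Module.finBasisOfFinrankEq K _ hinf
  let v : Fin f → (Fin f → K) := fun j =>
    if h : (j : ℕ) < f - 2 then (bint ⟨j, h⟩ : Fin f → K)
    else if (j : ℕ) = f - 2 then w1 else w2
  have himg1 : v '' {j : Fin f | (j : ℕ) ≠ f - 1} =
      Set.range (fun k => (bint k : Fin f → K)) ∪ {w1} := by
    ext z
    constructor
    · rintro ⟨j, hj, rfl⟩
      simp only [Set.mem_setOf_eq] at hj
      by_cases h : (j : ℕ) < f - 2
      · left; exact ⟨⟨j, h⟩, by simp only [v]; rw [dif_pos h]⟩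
      · right
        have hj2 : (j : ℕ) = f - 2 := by have := j.2; omega
        simp only [v]
        rw [dif_neg h, if_pos hj2]
        exact rfl
    · rintro (⟨k, rfl⟩ | rfl)
      · refine ⟨⟨k, by omega⟩, by simp only [Set.mem_setOf_eq, Fin.val_mk]; have := k.2; omega, ?_⟩
        simp only [v]
        rw [dif_pos]
        · simp
      · refine ⟨⟨f - 2, by omega⟩, by simp only [Set.mem_setOf_eq, Fin.val_mk]; omega, ?_⟩
        simp only [v, Fin.val_mk]
        rw [dif_neg (by omega)]
        simp
  have himg2 : v '' {j : Fin f | (j : ℕ) ≠ f - 2} =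
      Set.range (fun k => (bint k : Fin f → K)) ∪ {w2} := by
    ext z
    constructor
    · rintro ⟨j, hj, rfl⟩
      simp only [Set.mem_setOf_eq] at hj
      by_cases h : (j : ℕ) < f - 2
      · left; exact ⟨⟨j, h⟩, by simp only [v]; rw [dif_pos h]⟩
      · right
        simp only [v]
        rw [dif_neg h, if_neg hj]
        exact rfl
    · rintro (⟨k, rfl⟩ | rfl)
      · refine ⟨⟨k, by omega⟩, by simp only [Set.mem_setOf_eq, Fin.val_mk]; have := k.2; omega, ?_⟩
        simp only [v]
        rw [dif_pos]
        · simp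
      · refine ⟨⟨f - 1, by omega⟩, by simp only [Set.mem_setOf_eq, Fin.val_mk]; omega, ?_⟩
        simp only [v, Fin.val_mk]
        rw [dif_neg (by omega), if_neg (by omega)]
  have hgrow1 : (W1 ⊓ W2) ⊔ (K ∙ w1) = W1 := by
    apply grow inf_le_left hw1W1 hw1int
    rw [hinf, h1]
    omega
  have hgrow2 : (W1 ⊓ W2) ⊔ (K ∙ w2) = W2 := by
    apply grow inf_le_right hw2W2 hw2int
    rw [hinf, h2]
    omega
  have hspan1 : span K (v '' {j : Fin f | (j : ℕ) ≠ f - 1}) = W1 := by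
    rw [himg1, Submodule.span_union, span_val_basis]
    exact hgrow1
  have hspan2 : span K (v '' {j : Fin f | (j : ℕ) ≠ f - 2}) = W2 := by
    rw [himg2, Submodule.span_union, span_val_basis]
    exact hgrow2
  have hgrowtop : W1 ⊔ (K ∙ w2) = ⊤ := by
    apply grow le_top Submodule.mem_top hw2W1
    rw [h1, finrank_top, hfr]
    omega
  have htop : ⊤ ≤ span K (Set.range v) := by
    rw [← hgrowtop]
    apply sup_le
    · rw [← hspan1]
      exact Submodule.span_mono (Set.image_subset_range _ _)
    · rw [Submodule.span_singleton_le_iff_mem]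
      apply Submodule.subset_span
      refine ⟨⟨f - 1, by omega⟩, ?_⟩
      simp only [v, Fin.val_mk]
      rw [dif_neg (by omega), if_neg (by omega)]
  refine ⟨basisOfTopLeSpanOfCardEqFinrank v htop (by simp [hfr]), ?_, ?_⟩
  · rw [coe_basisOfTopLeSpanOfCardEqFinrank]; exact hspan1
  · rw [coe_basisOfTopLeSpanOfCardEqFinrank]; exact hspan2
lemma img_cos (e : (Fin f → K) ≃ₗ[K] (Fin f → K)) (a c : Fin f → K)
    {W W' : Submodule K (Fin f → K)}
    (h : W.map (e : (Fin f → K) →ₗ[K] (Fin f → K)) = W') (x : Fin f → K) :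
    ((Equiv.addRight a) * e.toEquiv * (Equiv.addRight c) : Equiv.Perm (Fin f → K)) ''
        (aCos W x) = aCos W' (e (x + c) + a) := by
  have hg : ∀ z, ((Equiv.addRight a) * e.toEquiv * (Equiv.addRight c) :
      Equiv.Perm (Fin f → K)) z = e (z + c) + a := fun z => rfl
  ext y
  constructor
  · rintro ⟨z, hz, rfl⟩
    rw [mem_aCos] at hz ⊢
    rw [hg]
    have : e (z + c) + a - (e (x + c) + a) = e (z - x) := by
      have h2 : e (z + c) + a - (e (x + c) + a) = e (z + c) - e (x + c) := by abel
      rw [h2, ← map_sub]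
      congr 1
      abel
    rw [this, ← h]
    exact ⟨z - x, hz, rfl⟩
  · intro hy
    rw [mem_aCos, ← h] at hy
    obtain ⟨w, hw, hew⟩ := hy
    refine ⟨x + w, mem_aCos.mpr (by simpa using hw), ?_⟩
    rw [hg]
    have : (e : (Fin f → K) →ₗ[K] (Fin f → K)) w = e w := rfl
    rw [this] at hew
    have : e (x + w + c) = e (x + c) + e w := by rw [← map_add]; congr 1; abel
    rw [this, hew]
    abel

lemma exists_hyp_not_mem (hf : 2 ≤ f) {u : Fin f → K} (hu : u ≠ 0) :
    ∃ W : Submodule K (Fin f → K), finrank K W = f - 1 ∧ u ∉ W := by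
  have hfr : finrank K (Fin f → K) = f := Module.finrank_fin_fun K
  have h1 : ¬ ∀ φ : Module.Dual K (Fin f → K), φ u = 0 := by
    rw [Module.forall_dual_apply_eq_zero_iff (R := K)]
    exact hu
  push_neg at h1
  obtain ⟨φ, hφu⟩ := h1
  have hφ : φ ≠ 0 := fun hc => hφu (by rw [hc]; rfl)
  exact ⟨LinearMap.ker φ, by rw [finrank_ker_func hφ, hfr], fun hc => hφu hc⟩

lemma exists_not_mem_hyp (hf : 2 ≤ f) {W : Submodule K (Fin f → K)}
    (hW : finrank K W = f - 1) : ∃ x, x ∉ W := by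
  have hfr : finrank K (Fin f → K) = f := Module.finrank_fin_fun K
  by_contra h
  push_neg at h
  have : W = ⊤ := eq_top_iff.mpr (fun x _ => h x)
  rw [this, finrank_top, hfr] at hW
  omega
end Helpers


/-- `s` is an affine hyperplane of `K^f`: a coset `x + W` of an
`(f-1)`-dimensional `K`-subspace `W`. -/
def IsAffineHyperplane (K : Type*) [Field K] (f : ℕ) (s : Set (Fin f → K)) : Prop :=
  ∃ (W : Submodule K (Fin f → K)) (x : Fin f → K),
    Module.finrank K W = f - 1 ∧ s = {y : Fin f → K | ∃ w ∈ W, y = x + w}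

/-- The design of points and affine hyperplanes of `AG(f,q)` is a non-trivial
2-(q^f, q^{f-1}, (q^{f-1}-1)/(q-1)) design, two distinct blocks meet in `0` or
`q^{f-2}` points, and the design is `G`-pairwise transitive for any group `G` of
permutations of `K^f` mapping affine hyperplanes to affine hyperplanes and
containing all translations and all linear maps of determinant 1. -/
theorem affine_design_pairwise_transitive
    {K : Type*} [Field K] [Fintype K] (f : ℕ) (hf : 2 ≤ f)
    (hq : 3 ≤ Fintype.card K ^ (f - 1))
    (G : Subgroup (Equiv.Perm (Fin f → K)))
    (hmap : ∀ g ∈ G, ∀ s : Set (Fin f → K),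
      IsAffineHyperplane K f s → IsAffineHyperplane K f (g '' s))
    (htrans : ∀ x : Fin f → K, Equiv.addRight x ∈ G)
    (hSL : ∀ e : (Fin f → K) ≃ₗ[K] (Fin f → K),
      LinearMap.det (e : (Fin f → K) →ₗ[K] (Fin f → K)) = 1 → e.toEquiv ∈ G) :
    -- `D` is a non-trivial 2-design with the stated parameters
    (Nat.card {s : Set (Fin f → K) // IsAffineHyperplane K f s} ≠ 0 ∧
     Nat.card (Fin f → K) = Fintype.card K ^ f ∧
     (∀ s : Set (Fin f → K), IsAffineHyperplane K f s →
        Nat.card ↥s = Fintype.card K ^ (f - 1)) ∧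
     (∀ x y : Fin f → K, x ≠ y →
        Nat.card {s : Set (Fin f → K) // IsAffineHyperplane K f s ∧ x ∈ s ∧ y ∈ s} =
          (Fintype.card K ^ (f - 1) - 1) / (Fintype.card K - 1)) ∧
     2 < Fintype.card K ^ (f - 1) ∧ Fintype.card K ^ (f - 1) < Fintype.card K ^ f) ∧
    -- two distinct blocks meet in `0` or `q^{f-2}` points
    (∀ s t : Set (Fin f → K), IsAffineHyperplane K f s → IsAffineHyperplane K f t →
      s ≠ t → Nat.card ↥(s ∩ t) = 0 ∨ Nat.card ↥(s ∩ t) = Fintype.card K ^ (f - 2)) ∧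
    -- `D` is `G`-pairwise transitive
    (∀ p₁ p₂ q₁ q₂ : Fin f → K, p₁ ≠ p₂ → q₁ ≠ q₂ →
      ∃ g ∈ G, g p₁ = q₁ ∧ g p₂ = q₂) ∧
    (∀ (p q : Fin f → K) (s t : Set (Fin f → K)),
      IsAffineHyperplane K f s → IsAffineHyperplane K f t → p ∈ s → q ∈ t →
      ∃ g ∈ G, g p = q ∧ g '' s = t) ∧
    (∀ (p q : Fin f → K) (s t : Set (Fin f → K)),
      IsAffineHyperplane K f s → IsAffineHyperplane K f t → p ∉ s → q ∉ t →
      ∃ g ∈ G, g p = q ∧ g '' s = t) ∧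
    (∀ s₁ s₂ t₁ t₂ : Set (Fin f → K),
      IsAffineHyperplane K f s₁ → IsAffineHyperplane K f s₂ →
      IsAffineHyperplane K f t₁ → IsAffineHyperplane K f t₂ →
      s₁ ≠ s₂ → t₁ ≠ t₂ → (s₁ ∩ s₂).Nonempty → (t₁ ∩ t₂).Nonempty →
      ∃ g ∈ G, g '' s₁ = t₁ ∧ g '' s₂ = t₂) ∧
    (∀ s₁ s₂ t₁ t₂ : Set (Fin f → K),
      IsAffineHyperplane K f s₁ → IsAffineHyperplane K f s₂ →
      IsAffineHyperplane K f t₁ → IsAffineHyperplane K f t₂ →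
      s₁ ∩ s₂ = ∅ → t₁ ∩ t₂ = ∅ →
      ∃ g ∈ G, g '' s₁ = t₁ ∧ g '' s₂ = t₂) := by
  classical
  have hfr : finrank K (Fin f → K) = f := Module.finrank_fin_fun K
  have hq2 : 1 < Fintype.card K := Fintype.one_lt_card
  have hrep : ∀ s : Set (Fin f → K), IsAffineHyperplane K f s →
      ∃ (W : Submodule K (Fin f → K)) (x : Fin f → K),
        finrank K W = f - 1 ∧ s = aCos W x := fun s hs => hs
  have hmk : ∀ (W : Submodule K (Fin f → K)) (x : Fin f → K), finrank K W = f - 1 →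
      IsAffineHyperplane K f (aCos W x) := fun W x hW => ⟨W, x, hW, rfl⟩
  -- the index used for determinant correction
  have hilast : ((⟨f - 1, by omega⟩ : Fin f) : ℕ) = f - 1 := rfl
  have hine : (⟨f - 1, by omega⟩ : Fin f) ≠ (⟨0, by omega⟩ : Fin f) := by
    intro hc
    have := congrArg (fun j : Fin f => (j : ℕ)) hc
    simp only [Fin.val_mk] at this
    omega
  refine ⟨⟨?_, ?_, ?_, ?_, by omega, ?_⟩, ?_, ?_, ?_, ?_, ?_, ?_⟩
  -- nonempty block set
  · obtain ⟨W0, hW0, _⟩ := exists_hyp_not_mem hf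
      (show (fun _ : Fin f => (1 : K)) ≠ 0 by
        intro hc
        have := congrFun hc ⟨0, by omega⟩
        simpa using this)
    exact Nat.card_ne_zero.mpr ⟨⟨⟨aCos W0 0, hmk W0 0 hW0⟩⟩, inferInstance⟩
  -- number of points
  · rw [Nat.card_eq_fintype_card, card_eq_pow_finrank (K := K) (V := Fin f → K), hfr]
  -- block sizes
  · intro s hs
    obtain ⟨W, x, hW, rfl⟩ := hrep s hs
    rw [card_aCos, hW]
  -- lambda
  · intro x y hxy
    have hv : y - x ≠ 0 := sub_ne_zero_of_ne (Ne.symm hxy)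
    have E : {W : Submodule K (Fin f → K) // finrank K W = f - 1 ∧ y - x ∈ W} ≃
        {s : Set (Fin f → K) // IsAffineHyperplane K f s ∧ x ∈ s ∧ y ∈ s} := by
      refine Equiv.ofBijective
        (fun W => ⟨aCos W.1 x, hmk W.1 x W.2.1, self_mem_aCos, mem_aCos.mpr W.2.2⟩) ⟨?_, ?_⟩
      · rintro ⟨W, hW⟩ ⟨W', hW'⟩ hWW'
        have : aCos W x = aCos W' x := congrArg Subtype.val hWW'
        exact Subtype.ext (aCos_inj this).1
      · rintro ⟨s, hs, hxs, hys⟩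
        obtain ⟨W, z, hW, rfl⟩ := hrep s hs
        have hsx : aCos W z = aCos W x := aCos_eq_of_mem hxs
        refine ⟨⟨W, hW, ?_⟩, ?_⟩
        · rw [← mem_aCos, ← hsx]
          exact hys
        · exact Subtype.ext hsx.symm
    rw [← Nat.card_congr E]
    exact card_hyperplanes_through hf hv
  -- v > k
  · exact Nat.pow_lt_pow_right hq2 (by omega)
  -- block intersections
  · intro s t hs ht hst
    obtain ⟨W1, x1, h1, rfl⟩ := hrep s hs
    obtain ⟨W2, x2, h2, rfl⟩ := hrep t ht
    by_cases hW : W1 = W2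
    · subst hW
      left
      have hdisj : aCos W1 x1 ∩ aCos W1 x2 = ∅ := by
        by_contra hc
        obtain ⟨p, hp1, hp2⟩ := Set.nonempty_iff_ne_empty.mpr hc
        exact hst ((aCos_eq_of_mem hp1).trans (aCos_eq_of_mem hp2).symm)
      rw [hdisj]
      simp
    · right
      obtain ⟨hsup, hinf⟩ := hyperplanes_sup_inf hf h1 h2 hW
      have hmem : x2 - x1 ∈ W1 ⊔ W2 := by rw [hsup]; exact Submodule.mem_top
      obtain ⟨w1, hw1, w2, hw2, hsum⟩ := Submodule.mem_sup.mp hmem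
      set p := x1 + w1 with hp
      have hp1 : p ∈ aCos W1 x1 := mem_aCos.mpr (by simpa [hp] using hw1)
      have hp2 : p ∈ aCos W2 x2 := by
        rw [mem_aCos]
        have : p - x2 = -w2 := by
          rw [hp, show x1 + w1 - x2 = w1 - (x2 - x1) from by abel, ← hsum]
          abel
        rw [this]
        exact W2.neg_mem hw2
      have hint : aCos W1 x1 ∩ aCos W2 x2 = aCos (W1 ⊓ W2) p := by
        rw [aCos_eq_of_mem hp1, aCos_eq_of_mem hp2]
        ext z
        simp only [Set.mem_inter_iff, mem_aCos, Submodule.mem_inf]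
      rw [hint, card_aCos, hinf]
  -- 2-transitivity on points
  · intro p₁ p₂ q₁ q₂ hp hq'
    have hu : p₂ - p₁ ≠ 0 := sub_ne_zero_of_ne (Ne.symm hp)
    have hu' : q₂ - q₁ ≠ 0 := sub_ne_zero_of_ne (Ne.symm hq')
    obtain ⟨W, hW, huW⟩ := exists_hyp_not_mem hf hu
    obtain ⟨W', hW', huW'⟩ := exists_hyp_not_mem hf hu'
    obtain ⟨b, _, hb⟩ := shapeA hf hW huW
    obtain ⟨c, _, hc⟩ := shapeA hf hW' huW'
    obtain ⟨e, μ, hμ, hdet, he1, _⟩ := exists_det_one_map_basis b c ⟨0, by omega⟩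
    refine ⟨(Equiv.addRight q₁) * e.toEquiv * (Equiv.addRight (-p₁)),
      G.mul_mem (G.mul_mem (htrans q₁) (hSL e hdet)) (htrans (-p₁)), ?_, ?_⟩
    · show e (p₁ + -p₁) + q₁ = q₁
      rw [add_neg_cancel, map_zero, zero_add]
    · show e (p₂ + -p₁) + q₁ = q₂
      have : e (p₂ + -p₁) = q₂ - q₁ := by
        rw [← sub_eq_add_neg, ← hb, ← hc]
        exact he1 _ hine
      rw [this, sub_add_cancel]
  -- flags
  · intro p q s t hs ht hps hqt
    obtain ⟨W1, x1, h1, rfl⟩ := hrep s hs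
    obtain ⟨W2, x2, h2, rfl⟩ := hrep t ht
    obtain ⟨z1, hz1⟩ := exists_not_mem_hyp hf h1
    obtain ⟨z2, hz2⟩ := exists_not_mem_hyp hf h2
    obtain ⟨b, hbs, _⟩ := shapeA hf h1 hz1
    obtain ⟨c, hcs, _⟩ := shapeA hf h2 hz2
    obtain ⟨e, μ, hμ, hdet, he1, he2⟩ := exists_det_one_map_basis b c ⟨0, by omega⟩
    have hmapW : W1.map (e : (Fin f → K) →ₗ[K] (Fin f → K)) = W2 := by
      rw [← hbs, ← hcs]
      exact map_span_scaled e b c _ hμ he1 he2 _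
    refine ⟨(Equiv.addRight q) * e.toEquiv * (Equiv.addRight (-p)),
      G.mul_mem (G.mul_mem (htrans q) (hSL e hdet)) (htrans (-p)), ?_, ?_⟩
    · show e (p + -p) + q = q
      rw [add_neg_cancel, map_zero, zero_add]
    · rw [aCos_eq_of_mem hps, img_cos e q (-p) hmapW p, aCos_eq_of_mem hqt]
      congr 1
      rw [add_neg_cancel, map_zero, zero_add]
  -- antiflags
  · intro p q s t hs ht hps hqt
    obtain ⟨W1, x1, h1, rfl⟩ := hrep s hs
    obtain ⟨W2, x2, h2, rfl⟩ := hrep t ht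
    have hz1 : x1 - p ∉ W1 := by
      intro hc
      apply hps
      rw [mem_aCos]
      simpa using W1.neg_mem hc
    have hz2 : x2 - q ∉ W2 := by
      intro hc
      apply hqt
      rw [mem_aCos]
      simpa using W2.neg_mem hc
    obtain ⟨b, hbs, hb⟩ := shapeA hf h1 hz1
    obtain ⟨c, hcs, hc⟩ := shapeA hf h2 hz2
    obtain ⟨e, μ, hμ, hdet, he1, he2⟩ := exists_det_one_map_basis b c ⟨0, by omega⟩
    have hmapW : W1.map (e : (Fin f → K) →ₗ[K] (Fin f → K)) = W2 := by
      rw [← hbs, ← hcs]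
      exact map_span_scaled e b c _ hμ he1 he2 _
    have hex : e (x1 - p) = x2 - q := by
      rw [← hb, ← hc]
      exact he1 _ hine
    refine ⟨(Equiv.addRight q) * e.toEquiv * (Equiv.addRight (-p)),
      G.mul_mem (G.mul_mem (htrans q) (hSL e hdet)) (htrans (-p)), ?_, ?_⟩
    · show e (p + -p) + q = q
      rw [add_neg_cancel, map_zero, zero_add]
    · rw [img_cos e q (-p) hmapW x1]
      congr 1
      rw [← sub_eq_add_neg, hex, sub_add_cancel]
  -- intersecting block pairs
  · intro s1 s2 t1 t2 hs1 hs2 ht1 ht2 hne_s hne_t hs_int ht_int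
    obtain ⟨W1, x1, h1, rfl⟩ := hrep s1 hs1
    obtain ⟨W2, x2, h2, rfl⟩ := hrep s2 hs2
    obtain ⟨U1, y1, k1, rfl⟩ := hrep t1 ht1
    obtain ⟨U2, y2, k2, rfl⟩ := hrep t2 ht2
    obtain ⟨r, hr1, hr2⟩ := hs_int
    obtain ⟨r', hr1', hr2'⟩ := ht_int
    have hWne : W1 ≠ W2 := by
      rintro rfl
      exact hne_s ((aCos_eq_of_mem hr1).trans (aCos_eq_of_mem hr2).symm)
    have hUne : U1 ≠ U2 := by
      rintro rfl
      exact hne_t ((aCos_eq_of_mem hr1').trans (aCos_eq_of_mem hr2').symm)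
    obtain ⟨b, hb1, hb2⟩ := shapeB hf h1 h2 hWne
    obtain ⟨c, hc1, hc2⟩ := shapeB hf k1 k2 hUne
    obtain ⟨e, μ, hμ, hdet, he1, he2⟩ := exists_det_one_map_basis b c ⟨0, by omega⟩
    have hmapW1 : W1.map (e : (Fin f → K) →ₗ[K] (Fin f → K)) = U1 := by
      rw [← hb1, ← hc1]
      exact map_span_scaled e b c _ hμ he1 he2 _
    have hmapW2 : W2.map (e : (Fin f → K) →ₗ[K] (Fin f → K)) = U2 := by
      rw [← hb2, ← hc2]
      exact map_span_scaled e b c _ hμ he1 he2 _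
    refine ⟨(Equiv.addRight r') * e.toEquiv * (Equiv.addRight (-r)),
      G.mul_mem (G.mul_mem (htrans r') (hSL e hdet)) (htrans (-r)), ?_, ?_⟩
    · rw [aCos_eq_of_mem hr1, img_cos e r' (-r) hmapW1 r, aCos_eq_of_mem hr1']
      congr 1
      rw [add_neg_cancel, map_zero, zero_add]
    · rw [aCos_eq_of_mem hr2, img_cos e r' (-r) hmapW2 r, aCos_eq_of_mem hr2']
      congr 1
      rw [add_neg_cancel, map_zero, zero_add]
  -- disjoint block pairs
  · intro s1 s2 t1 t2 hs1 hs2 ht1 ht2 hdisj_s hdisj_t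
    obtain ⟨W1, x1, h1, rfl⟩ := hrep s1 hs1
    obtain ⟨W2, x2, h2, rfl⟩ := hrep s2 hs2
    obtain ⟨U1, y1, k1, rfl⟩ := hrep t1 ht1
    obtain ⟨U2, y2, k2, rfl⟩ := hrep t2 ht2
    -- directions coincide for disjoint blocks
    have hdir : ∀ (A B : Submodule K (Fin f → K)) (u v : Fin f → K),
        finrank K A = f - 1 → finrank K B = f - 1 → aCos A u ∩ aCos B v = ∅ → A = B := by
      intro A B u v hA hB hAB
      by_contra hne
      obtain ⟨hsup, -⟩ := hyperplanes_sup_inf hf hA hB hne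
      have hmem : v - u ∈ A ⊔ B := by rw [hsup]; exact Submodule.mem_top
      obtain ⟨w1, hw1, w2, hw2, hsum⟩ := Submodule.mem_sup.mp hmem
      have hp1 : u + w1 ∈ aCos A u := mem_aCos.mpr (by simpa using hw1)
      have hp2 : u + w1 ∈ aCos B v := by
        rw [mem_aCos]
        have : u + w1 - v = -w2 := by
          rw [show u + w1 - v = w1 - (v - u) from by abel, ← hsum]
          abel
        rw [this]
        exact B.neg_mem hw2
      have : u + w1 ∈ aCos A u ∩ aCos B v := ⟨hp1, hp2⟩
      rw [hAB] at this
      exact this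
    have hW12 : W1 = W2 := hdir _ _ _ _ h1 h2 hdisj_s
    have hU12 : U1 = U2 := hdir _ _ _ _ k1 k2 hdisj_t
    subst hW12
    subst hU12
    have hd : x2 - x1 ∉ W1 := by
      intro hc
      have hx2 : x2 ∈ aCos W1 x1 := mem_aCos.mpr hc
      have : x2 ∈ aCos W1 x1 ∩ aCos W1 x2 := ⟨hx2, self_mem_aCos⟩
      rw [hdisj_s] at this
      exact this
    have hd' : y2 - y1 ∉ U1 := by
      intro hc
      have hy2 : y2 ∈ aCos U1 y1 := mem_aCos.mpr hc
      have : y2 ∈ aCos U1 y1 ∩ aCos U1 y2 := ⟨hy2, self_mem_aCos⟩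
      rw [hdisj_t] at this
      exact this
    obtain ⟨b, hbs, hb⟩ := shapeA hf h1 hd
    obtain ⟨c, hcs, hc⟩ := shapeA hf k1 hd'
    obtain ⟨e, μ, hμ, hdet, he1, he2⟩ := exists_det_one_map_basis b c ⟨0, by omega⟩
    have hmapW : W1.map (e : (Fin f → K) →ₗ[K] (Fin f → K)) = U1 := by
      rw [← hbs, ← hcs]
      exact map_span_scaled e b c _ hμ he1 he2 _
    have hex : e (x2 - x1) = y2 - y1 := by
      rw [← hb, ← hc]
      exact he1 _ hine
    refine ⟨(Equiv.addRight y1) * e.toEquiv * (Equiv.addRight (-x1)),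
      G.mul_mem (G.mul_mem (htrans y1) (hSL e hdet)) (htrans (-x1)), ?_, ?_⟩
    · rw [img_cos e y1 (-x1) hmapW x1]
      congr 1
      rw [add_neg_cancel, map_zero, zero_add]
    · rw [img_cos e y1 (-x1) hmapW x2]
      congr 1
      rw [← sub_eq_add_neg, hex, sub_add_cancel]
end

section
/- Let q be a prime power, d ≥ 4, and K = GF(q). Let P be the set of 1-dimensional K-subspaces of K^d, let B be the set of 2-dimensional K-subspaces of K^d, with inclusion as incidence, and let H be any subgroup of GL(d,K) containing SL(d,K), acting on P and B in the natural way. Then D = (P,B,⊆) is a non-trivial 2-((q^d−1)/(q−1), q+1, 1) design, any two distinct blocks are incident with at most one common point and some pair of blocks is incident with no common point, and D is H-pairwise transitive. -/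
open Module Submodule Set

section aux
variable {K V : Type*} [Field K] [AddCommGroup V] [Module K V]

private lemma pld_extend_basis [FiniteDimensional K V] (k : ℕ) (hk0 : 0 < k)
    (hk : k ≤ finrank K V) (v : Fin k → V) (hv : LinearIndependent K v) :
    ∃ b : Basis (Fin (finrank K V)) K V, ∀ i : Fin k, b (Fin.castLE hk i) = v i := by
  have : Nonempty (Fin k) := ⟨⟨0, hk0⟩⟩
  by_cases h : k = finrank K V
  · have hcard : Fintype.card (Fin k) = finrank K V := by simp [h]
    refine ⟨(basisOfLinearIndependentOfCardEqFinrank hv hcard).reindex (finCongr h), fun i => ?_⟩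
    rw [Basis.reindex_apply]
    have : (finCongr h).symm (Fin.castLE hk i) = i := by
      ext; simp
    rw [this, coe_basisOfLinearIndependentOfCardEqFinrank]
  · have hk' : k + 1 ≤ finrank K V := lt_of_le_of_ne hk h
    have hsp : span K (Set.range v) ≠ ⊤ := by
      intro hT
      have h2 := finrank_span_eq_card hv
      rw [hT] at h2
      simp only [finrank_top, Fintype.card_fin] at h2
      omega
    have hlt : span K (Set.range v) < (⊤ : Submodule K V) := Ne.lt_top hsp
    obtain ⟨x, -, hx⟩ := SetLike.exists_of_lt hlt
    have hv' : LinearIndependent K (Fin.snoc v x) :=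
      linearIndependent_fin_snoc.mpr ⟨hv, hx⟩
    obtain ⟨b, hb⟩ := pld_extend_basis (k + 1) (by omega) hk' (Fin.snoc v x) hv'
    refine ⟨b, fun i => ?_⟩
    have h2 := hb (Fin.castSucc i)
    rw [Fin.snoc_castSucc] at h2
    have : Fin.castLE hk' (Fin.castSucc i) = Fin.castLE hk i := by ext; simp
    rwa [this] at h2
termination_by finrank K V - k
decreasing_by omega

end aux

section det
variable {K V : Type*} [Field K] [AddCommGroup V] [Module K V]

private lemma pld_diag_det [FiniteDimensional K V] (c : Basis (Fin (finrank K V)) K V)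
    (u : Fin (finrank K V) → Kˣ) :
    LinearMap.det ((c.equiv (c.unitsSMul u) (Equiv.refl _) :
        V ≃ₗ[K] V) : V →ₗ[K] V) = ∏ i, (u i : K) := by
  classical
  set s := (c.equiv (c.unitsSMul u) (Equiv.refl _) : V ≃ₗ[K] V)
  have hM : LinearMap.toMatrix c c (s : V →ₗ[K] V) =
      Matrix.diagonal (fun i => (u i : K)) := by
    ext i j
    rw [LinearMap.toMatrix_apply]
    have hs : ((s : V →ₗ[K] V)) (c j) = (u j : K) • c j := by
      simp [s, Basis.equiv_apply, Basis.unitsSMul_apply, Units.smul_def]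
    rw [hs, map_smul, Basis.repr_self]
    simp only [Finsupp.smul_apply, Finsupp.single_apply, Matrix.diagonal_apply, smul_eq_mul]
    by_cases h : i = j
    · subst h; simp
    · rw [if_neg (fun hji => h hji.symm), if_neg h, mul_zero]
  rw [← LinearMap.det_toMatrix c, hM, Matrix.det_diagonal]

private lemma pld_exists_det_one [FiniteDimensional K V] {k : ℕ} (hk0 : 0 < k)
    (hk : k ≤ finrank K V) (v w : Fin k → V)
    (hv : LinearIndependent K v) (hw : LinearIndependent K w) :
    ∃ e : V ≃ₗ[K] V,
      LinearMap.det (e : V →ₗ[K] V) = 1 ∧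
      ∀ i : Fin k, ∃ a : K, IsUnit a ∧ e (v i) = a • w i := by
  classical
  obtain ⟨b, hb⟩ := pld_extend_basis k hk0 hk v hv
  obtain ⟨c, hc⟩ := pld_extend_basis k hk0 hk w hw
  set f := b.equiv c (Equiv.refl _)
  set δ : Kˣ := LinearEquiv.det f
  set i0 : Fin (finrank K V) := Fin.castLE hk ⟨0, hk0⟩
  set u : Fin (finrank K V) → Kˣ := fun i => if i = i0 then δ⁻¹ else 1 with hu
  set s := (c.equiv (c.unitsSMul u) (Equiv.refl _) : V ≃ₗ[K] V)
  refine ⟨f.trans s, ?_, ?_⟩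
  · have hcomp : ((f.trans s : V ≃ₗ[K] V) : V →ₗ[K] V) =
        (s : V →ₗ[K] V) ∘ₗ (f : V →ₗ[K] V) := rfl
    rw [hcomp, LinearMap.det_comp, pld_diag_det]
    have hprod : (∏ i, (u i : K)) = ((δ⁻¹ : Kˣ) : K) := by
      rw [Finset.prod_eq_single i0]
      · simp [hu]
      · intro j _ hj; simp [hu, hj]
      · simp
    rw [hprod, ← LinearEquiv.coe_det]
    exact_mod_cast Units.inv_mul δ
  · intro i
    refine ⟨(u (Fin.castLE hk i) : K), Units.isUnit _, ?_⟩
    have h1 : f (v i) = c (Fin.castLE hk i) := by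
      rw [← hb i, Basis.equiv_apply]
      simp
    have h2 : s (c (Fin.castLE hk i)) = (u (Fin.castLE hk i) : K) • c (Fin.castLE hk i) := by
      simp [s, Basis.equiv_apply, Basis.unitsSMul_apply, Units.smul_def]
    rw [LinearEquiv.trans_apply, h1, h2, hc i]

end det

section geom
variable {K V : Type*} [Field K] [AddCommGroup V] [Module K V] [FiniteDimensional K V]

private lemma pld_range2 (x y : V) : Set.range ![x, y] = {x, y} := by
  simp only [Matrix.range_cons, Matrix.range_empty, Set.union_empty, Set.union_singleton]
  exact Set.pair_comm y x

private lemma pld_point {W : Submodule K V} (h : finrank K W = 1) :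
    ∃ x : V, x ≠ 0 ∧ W = span K {x} := by
  have hbot : W ≠ ⊥ := by
    intro hb; rw [hb, finrank_bot] at h; omega
  obtain ⟨x, hxW, hx⟩ := Submodule.exists_mem_ne_zero_of_ne_bot hbot
  refine ⟨x, hx, ?_⟩
  refine (Submodule.eq_of_le_of_finrank_le ?_ ?_).symm
  · rwa [span_le, Set.singleton_subset_iff]
  · rw [h, finrank_span_singleton hx]

private lemma pld_pair_li {x y : V} (hx : x ≠ 0) (hy : y ∉ span K {x}) :
    LinearIndependent K ![x, y] := by
  have hy0 : y ≠ 0 := fun h => hy (h ▸ Submodule.zero_mem _)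
  have hr : Set.range ![y] = {y} := by simp [Matrix.range_cons, Matrix.range_empty]
  have hxy : x ∉ span K (Set.range ![y]) := by
    rw [hr]
    intro hm
    obtain ⟨a, ha⟩ := Submodule.mem_span_singleton.mp hm
    have ha0 : a ≠ 0 := by rintro rfl; simp at ha; exact hx ha.symm
    apply hy
    have : y = a⁻¹ • x := by rw [← ha, smul_smul, inv_mul_cancel₀ ha0, one_smul]
    rw [this]
    exact Submodule.smul_mem _ _ (Submodule.mem_span_singleton_self x)
  have h1 : LinearIndependent K ![y] := by
    refine linearIndependent_unique_iff.mpr ?_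
    simpa using hy0
  exact linearIndependent_fin_cons.mpr ⟨h1, hxy⟩

private lemma pld_span_pair_finrank {x y : V} (h : LinearIndependent K ![x, y]) :
    finrank K (span K ({x, y} : Set V)) = 2 := by
  rw [← pld_range2, finrank_span_eq_card h, Fintype.card_fin]

private lemma pld_flag {W L : Submodule K V} (hW : finrank K W = 1) (hL : finrank K L = 2)
    (hWL : W ≤ L) :
    ∃ x y : V, x ≠ 0 ∧ W = span K {x} ∧ L = span K {x, y} ∧ LinearIndependent K ![x, y] := by
  obtain ⟨x, hx, hWs⟩ := pld_point hW
  have hlt : W < L := lt_of_le_of_ne hWL (by intro h; rw [h, hL] at hW; omega)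
  obtain ⟨y, hyL, hyW⟩ := SetLike.exists_of_lt hlt
  have hli : LinearIndependent K ![x, y] := pld_pair_li hx (hWs ▸ hyW)
  refine ⟨x, y, hx, hWs, ?_, hli⟩
  refine (Submodule.eq_of_le_of_finrank_le ?_ ?_).symm
  · rw [span_le, Set.insert_subset_iff, Set.singleton_subset_iff]
    exact ⟨hWL (hWs ▸ Submodule.mem_span_singleton_self x), hyL⟩
  · rw [hL, pld_span_pair_finrank hli]

private lemma pld_span_smul_pair {a b : K} (ha : IsUnit a) (hb : IsUnit b) (x y : V) :
    span K ({a • x, b • y} : Set V) = span K {x, y} := by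
  rw [show ({a • x, b • y} : Set V) = insert (a • x) {b • y} from rfl,
    Submodule.span_insert, show ({x, y} : Set V) = insert x {y} from rfl,
    Submodule.span_insert, Submodule.span_singleton_smul_eq ha,
    Submodule.span_singleton_smul_eq hb]

end geom

set_option linter.unusedSectionVars false

section count
variable {K V : Type*} [Field K] [Fintype K] [AddCommGroup V] [Module K V]
  [FiniteDimensional K V] [Fintype V]

private lemma pld_count_core :
    Nat.card {W : Submodule K V // finrank K W = 1} * (Fintype.card K - 1)
      = Fintype.card K ^ finrank K V - 1 := by
  classical
  haveI : Finite (Submodule K V) :=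
    Finite.of_injective (fun W : Submodule K V => (W : Set V)) SetLike.coe_injective
  haveI : Fintype (Submodule K V) := Fintype.ofFinite _
  set q := Fintype.card K with hq
  let s : Finset V := Finset.univ.filter (fun v => v ≠ 0)
  let t : Finset (Submodule K V) := Finset.univ.filter (fun W => finrank K W = 1)
  have hmaps : ∀ v ∈ s, span K {v} ∈ t := by
    intro v hv
    simp only [s, Finset.mem_filter, Finset.mem_univ, true_and] at hv
    simp only [t, Finset.mem_filter, Finset.mem_univ, true_and]
    exact finrank_span_singleton hv
  have hcard := Finset.card_eq_sum_card_fiberwise hmaps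
  have hs : s.card = q ^ finrank K V - 1 := by
    have : s.card = Fintype.card V - 1 := by
      simp only [s, Finset.filter_ne']
      rw [Finset.card_erase_of_mem (Finset.mem_univ _), Finset.card_univ]
    rw [this, card_eq_pow_finrank (K := K) (V := V)]
  have hfib : ∀ W ∈ t, (s.filter (fun v => span K {v} = W)).card = q - 1 := by
    intro W hW
    simp only [t, Finset.mem_filter, Finset.mem_univ, true_and] at hW
    have hset : s.filter (fun v => span K {v} = W)
        = Finset.univ.filter (fun v : V => v ∈ W ∧ v ≠ 0) := by
      ext v
      simp only [s, Finset.mem_filter, Finset.mem_univ, true_and]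
      constructor
      · rintro ⟨hv0, hsp⟩
        exact ⟨hsp ▸ Submodule.mem_span_singleton_self v, hv0⟩
      · rintro ⟨hvW, hv0⟩
        refine ⟨hv0, Submodule.eq_of_le_of_finrank_le ?_ ?_⟩
        · rwa [span_le, Set.singleton_subset_iff]
        · rw [hW, finrank_span_singleton hv0]
    rw [hset, ← Fintype.card_subtype]
    have e : {v : V // v ∈ W ∧ v ≠ 0} ≃ {x : W // ¬ (x = 0)} :=
      { toFun := fun v => ⟨⟨v.1, v.2.1⟩, fun h => v.2.2 (by simpa using congrArg Subtype.val h)⟩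
        invFun := fun x => ⟨x.1.1, x.1.2, fun h => x.2 (Subtype.ext h)⟩
        left_inv := fun v => rfl
        right_inv := fun x => rfl }
    rw [Fintype.card_congr e, Fintype.card_subtype_compl, Fintype.card_subtype_eq]
    rw [card_eq_pow_finrank (K := K) (V := W), hW, pow_one]
  rw [Finset.sum_congr rfl hfib, Finset.sum_const, smul_eq_mul] at hcard
  rw [hs] at hcard
  rw [Nat.card_eq_fintype_card, Fintype.card_subtype]
  exact hcard.symm

private lemma pld_q_pos : 2 ≤ Fintype.card K := Fintype.one_lt_card

private lemma pld_count_points :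
    Nat.card {W : Submodule K V // finrank K W = 1}
      = (Fintype.card K ^ finrank K V - 1) / (Fintype.card K - 1) := by
  have h := pld_count_core (K := K) (V := V)
  have hq : 2 ≤ Fintype.card K := pld_q_pos
  exact (Nat.div_eq_of_eq_mul_left (by omega) h.symm).symm

end count

section count2
variable {K V : Type*} [Field K] [Fintype K] [AddCommGroup V] [Module K V]
  [FiniteDimensional K V] [Fintype V]

private lemma pld_count_in_line {L : Submodule K V} (hL : finrank K L = 2) :
    Nat.card {W : Submodule K V // finrank K W = 1 ∧ W ≤ L} = Fintype.card K + 1 := by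
  classical
  haveI : Fintype L := Fintype.ofFinite L
  set q := Fintype.card K with hqdef
  have hq : 2 ≤ q := pld_q_pos
  -- transfer to submodules of L
  have key : Nat.card {W' : Submodule K L // finrank K W' = 1} * (q - 1) = q ^ 2 - 1 := by
    have := pld_count_core (K := K) (V := L)
    rwa [hL] at this
  have hmul : (q + 1) * (q - 1) = q ^ 2 - 1 := by
    obtain ⟨m, hm⟩ : ∃ m, q = m + 2 := ⟨q - 2, by omega⟩
    rw [hm]
    have h3 : m + 2 - 1 = m + 1 := by omega
    have h2 : (m + 2) ^ 2 = (m + 2 + 1) * (m + 1) + 1 := by ring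
    rw [h3, h2, Nat.add_sub_cancel]
  have hcardL : Nat.card {W' : Submodule K L // finrank K W' = 1} = q + 1 := by
    have := key.trans hmul.symm
    exact Nat.eq_of_mul_eq_mul_right (by omega) this
  rw [← hcardL]
  apply Nat.card_congr
  refine Equiv.symm ?_
  have e1 : {W' : Submodule K L // finrank K W' = 1} ≃
      {p : {W : Submodule K V // W ≤ L} // finrank K p.1 = 1} := by
    refine Equiv.subtypeEquiv (Submodule.MapSubtype.orderIso L).toEquiv (fun W' => ?_)
    have : ((Submodule.MapSubtype.orderIso L) W' : Submodule K V) = W'.map L.subtype := rfl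
    rw [show (((Submodule.MapSubtype.orderIso L).toEquiv W' : {W : Submodule K V // W ≤ L}) :
      Submodule K V) = W'.map L.subtype from rfl]
    rw [Submodule.finrank_map_subtype_eq]
  have e2 : {p : {W : Submodule K V // W ≤ L} // finrank K p.1 = 1} ≃
      {W : Submodule K V // W ≤ L ∧ finrank K W = 1} :=
    Equiv.subtypeSubtypeEquivSubtypeInter (fun W : Submodule K V => W ≤ L) (fun W => finrank K W = 1)
  have e3 : {W : Submodule K V // W ≤ L ∧ finrank K W = 1} ≃
      {W : Submodule K V // finrank K W = 1 ∧ W ≤ L} :=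
    Equiv.subtypeEquivRight (fun W => and_comm)
  exact (e1.trans e2).trans e3

private lemma pld_unique_line {W W' : Submodule K V} (hW : finrank K W = 1)
    (hW' : finrank K W' = 1) (hne : W ≠ W') :
    Nat.card {L : Submodule K V // finrank K L = 2 ∧ W ≤ L ∧ W' ≤ L} = 1 := by
  have hinf : W ⊓ W' = ⊥ := by
    by_contra hb
    have h1 : finrank K (W ⊓ W' : Submodule K V) ≤ 1 := hW ▸ Submodule.finrank_mono inf_le_left
    have h0 : finrank K (W ⊓ W' : Submodule K V) ≠ 0 := fun h =>
      hb (Submodule.finrank_eq_zero.mp h)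
    have heq : finrank K (W ⊓ W' : Submodule K V) = 1 := by omega
    have e1 : W ⊓ W' = W := Submodule.eq_of_le_of_finrank_le inf_le_left (by omega)
    have e2 : W ⊓ W' = W' := Submodule.eq_of_le_of_finrank_le inf_le_right (by omega)
    exact hne (e1.symm.trans e2)
  have hsup : finrank K (W ⊔ W' : Submodule K V) = 2 := by
    have := Submodule.finrank_sup_add_finrank_inf_eq W W'
    rw [hinf, finrank_bot, hW, hW'] at this
    omega
  rw [Nat.card_eq_one_iff_unique]
  constructor
  · constructor
    rintro ⟨L, hL, hWL, hW'L⟩ ⟨M, hM, hWM, hW'M⟩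
    have h1 : L = W ⊔ W' :=
      (Submodule.eq_of_le_of_finrank_le (sup_le hWL hW'L) (by omega)).symm
    have h2 : M = W ⊔ W' :=
      (Submodule.eq_of_le_of_finrank_le (sup_le hWM hW'M) (by omega)).symm
    exact Subtype.ext (h1.trans h2.symm)
  · exact ⟨⟨W ⊔ W', hsup, le_sup_left, le_sup_right⟩⟩

private lemma pld_at_most_one {L L' : Submodule K V} (hL : finrank K L = 2)
    (hL' : finrank K L' = 2) (hne : L ≠ L') :
    Nat.card {W : Submodule K V // finrank K W = 1 ∧ W ≤ L ∧ W ≤ L'} ≤ 1 := by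
  have hsub : Subsingleton {W : Submodule K V // finrank K W = 1 ∧ W ≤ L ∧ W ≤ L'} := by
    constructor
    rintro ⟨W, hW, hWL, hWL'⟩ ⟨W', hW', hW'L, hW'L'⟩
    ext1
    by_contra hne'
    have h1 := pld_unique_line (V := V) hW hW' hne'
    rw [Nat.card_eq_one_iff_unique] at h1
    obtain ⟨hs, _⟩ := h1
    have := hs.allEq ⟨L, hL, hWL, hW'L⟩ ⟨L', hL', hWL', hW'L'⟩
    exact hne (congrArg Subtype.val this)
  rcases isEmpty_or_nonempty {W : Submodule K V // finrank K W = 1 ∧ W ≤ L ∧ W ≤ L'} with h | h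
  · simp [Nat.card_of_isEmpty]
  · haveI := hsub
    rw [Nat.card_eq_one_iff_unique.mpr ⟨hsub, h⟩]

end count2

section geom2
variable {K V : Type*} [Field K] [AddCommGroup V] [Module K V] [FiniteDimensional K V]

private lemma pld_range3 (x y z : V) : Set.range ![x, y, z] = {x, y, z} := by
  ext w
  constructor
  · rintro ⟨i, rfl⟩
    fin_cases i <;> simp
  · intro hw
    rcases hw with h | h | h
    · exact ⟨0, h.symm⟩
    · exact ⟨1, h.symm⟩
    · exact ⟨2, h.symm⟩

private lemma pld_flag_ext {L : Submodule K V} (hL : finrank K L = 2) {x : V} (hx : x ≠ 0)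
    (hxL : x ∈ L) :
    ∃ y : V, L = span K {x, y} ∧ LinearIndependent K ![x, y] := by
  have hWL : span K {x} ≤ L := by rwa [span_le, Set.singleton_subset_iff]
  have hlt : span K {x} < L := lt_of_le_of_ne hWL (by
    intro h
    have h2 : finrank K (span K ({x} : Set V)) = 1 := finrank_span_singleton hx
    rw [h, hL] at h2; omega)
  obtain ⟨y, hyL, hyW⟩ := SetLike.exists_of_lt hlt
  have hli : LinearIndependent K ![x, y] := pld_pair_li hx hyW
  refine ⟨y, ?_, hli⟩
  refine (Submodule.eq_of_le_of_finrank_le ?_ ?_).symm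
  · rw [span_le, Set.insert_subset_iff, Set.singleton_subset_iff]
    exact ⟨hxL, hyL⟩
  · rw [hL, pld_span_pair_finrank hli]

private lemma pld_line {L : Submodule K V} (hL : finrank K L = 2) :
    ∃ x y : V, L = span K {x, y} ∧ LinearIndependent K ![x, y] := by
  have hbot : L ≠ ⊥ := by
    intro hb; rw [hb, finrank_bot] at hL; omega
  obtain ⟨x, hxL, hx⟩ := Submodule.exists_mem_ne_zero_of_ne_bot hbot
  obtain ⟨y, h1, h2⟩ := pld_flag_ext hL hx hxL
  exact ⟨x, y, h1, h2⟩

private lemma pld_li_pair_left {x y : V} (h : LinearIndependent K ![x, y]) :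
    x ∉ span K ({y} : Set V) := by
  have h2 := linearIndependent_fin_cons.mp h
  have hr : Set.range ![y] = {y} := by simp [Matrix.range_cons, Matrix.range_empty]
  rw [hr] at h2
  exact h2.2

private lemma pld_li_triple {x y z : V} (h : LinearIndependent K ![y, z])
    (hx : x ∉ span K ({y, z} : Set V)) : LinearIndependent K ![x, y, z] := by
  have : x ∉ span K (Set.range ![y, z]) := by rwa [pld_range2]
  exact linearIndependent_fin_cons.mpr ⟨h, this⟩

private lemma pld_map_span_singleton (e : V ≃ₗ[K] V) (x : V) :
    (span K ({x} : Set V)).map (e : V →ₗ[K] V) = span K {e x} := by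
  rw [Submodule.map_span]
  congr 1
  simp

private lemma pld_map_span_pair (e : V ≃ₗ[K] V) (x y : V) :
    (span K ({x, y} : Set V)).map (e : V →ₗ[K] V) = span K {e x, e y} := by
  rw [Submodule.map_span]
  congr 1
  simp [Set.image_insert_eq]

end geom2

section move
variable {K : Type*} [Field K] {d : ℕ}

private lemma pld_move (H : Subgroup ((Fin d → K) ≃ₗ[K] (Fin d → K)))
    (hSL : ∀ e : (Fin d → K) ≃ₗ[K] (Fin d → K),
      LinearMap.det (e : (Fin d → K) →ₗ[K] (Fin d → K)) = 1 → e ∈ H)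
    {k : ℕ} (hk0 : 0 < k) (hk : k ≤ d) (v w : Fin k → (Fin d → K))
    (hv : LinearIndependent K v) (hw : LinearIndependent K w) :
    ∃ e : (Fin d → K) ≃ₗ[K] (Fin d → K), e ∈ H ∧
      ∀ i : Fin k, ∃ a : K, IsUnit a ∧ e (v i) = a • w i := by
  have hk' : k ≤ finrank K (Fin d → K) := by
    rw [Module.finrank_fin_fun]; exact hk
  obtain ⟨e, hdet, h⟩ := pld_exists_det_one hk0 hk' v w hv hw
  exact ⟨e, hSL e hdet, h⟩

end move

/-- The design of points (1-dimensional subspaces) and lines (2-dimensional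
subspaces) of `PG(d-1,q)`, `d ≥ 4`, is a non-trivial
2-((q^d-1)/(q-1), q+1, 1) design, two distinct blocks are incident with at most one
common point, some two blocks have no common point, and the design is `H`-pairwise
transitive for any subgroup `H` of `GL(d,K)` containing all the linear automorphisms
of determinant 1 (i.e. containing `SL(d,K)`). -/
theorem projective_lines_design_pairwise_transitive
    {K : Type*} [Field K] [Fintype K] (d : ℕ) (hd : 4 ≤ d)
    (H : Subgroup ((Fin d → K) ≃ₗ[K] (Fin d → K)))
    (hSL : ∀ e : (Fin d → K) ≃ₗ[K] (Fin d → K),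
      LinearMap.det (e : (Fin d → K) →ₗ[K] (Fin d → K)) = 1 → e ∈ H) :
    -- non-trivial 2-design with parameters ((q^d-1)/(q-1), q+1, 1)
    (Nat.card {W : Submodule K (Fin d → K) // Module.finrank K W = 1} =
        (Fintype.card K ^ d - 1) / (Fintype.card K - 1) ∧
     (∀ L : Submodule K (Fin d → K), Module.finrank K L = 2 →
        Nat.card {W : Submodule K (Fin d → K) // Module.finrank K W = 1 ∧ W ≤ L} =
          Fintype.card K + 1) ∧
     (∀ W W' : Submodule K (Fin d → K), Module.finrank K W = 1 → Module.finrank K W' = 1 →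
        W ≠ W' →
        Nat.card {L : Submodule K (Fin d → K) //
          Module.finrank K L = 2 ∧ W ≤ L ∧ W' ≤ L} = 1) ∧
     2 < Fintype.card K + 1 ∧
     Fintype.card K + 1 < (Fintype.card K ^ d - 1) / (Fintype.card K - 1)) ∧
    -- two distinct blocks share at most one point, and some two blocks are disjoint
    (∀ L L' : Submodule K (Fin d → K), Module.finrank K L = 2 → Module.finrank K L' = 2 →
      L ≠ L' →
      Nat.card {W : Submodule K (Fin d → K) //
        Module.finrank K W = 1 ∧ W ≤ L ∧ W ≤ L'} ≤ 1) ∧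
    (∃ L L' : Submodule K (Fin d → K), Module.finrank K L = 2 ∧ Module.finrank K L' = 2 ∧
      ¬ ∃ W : Submodule K (Fin d → K), Module.finrank K W = 1 ∧ W ≤ L ∧ W ≤ L') ∧
    -- `H`-pairwise transitivity
    (∀ W₁ W₂ U₁ U₂ : Submodule K (Fin d → K),
      Module.finrank K W₁ = 1 → Module.finrank K W₂ = 1 →
      Module.finrank K U₁ = 1 → Module.finrank K U₂ = 1 → W₁ ≠ W₂ → U₁ ≠ U₂ →
      ∃ e ∈ H, W₁.map (e : (Fin d → K) →ₗ[K] (Fin d → K)) = U₁ ∧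
        W₂.map (e : (Fin d → K) →ₗ[K] (Fin d → K)) = U₂) ∧
    (∀ W U L M : Submodule K (Fin d → K),
      Module.finrank K W = 1 → Module.finrank K U = 1 →
      Module.finrank K L = 2 → Module.finrank K M = 2 → W ≤ L → U ≤ M →
      ∃ e ∈ H, W.map (e : (Fin d → K) →ₗ[K] (Fin d → K)) = U ∧
        L.map (e : (Fin d → K) →ₗ[K] (Fin d → K)) = M) ∧
    (∀ W U L M : Submodule K (Fin d → K),
      Module.finrank K W = 1 → Module.finrank K U = 1 →
      Module.finrank K L = 2 → Module.finrank K M = 2 → ¬ W ≤ L → ¬ U ≤ M →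
      ∃ e ∈ H, W.map (e : (Fin d → K) →ₗ[K] (Fin d → K)) = U ∧
        L.map (e : (Fin d → K) →ₗ[K] (Fin d → K)) = M) ∧
    (∀ L₁ L₂ M₁ M₂ : Submodule K (Fin d → K),
      Module.finrank K L₁ = 2 → Module.finrank K L₂ = 2 →
      Module.finrank K M₁ = 2 → Module.finrank K M₂ = 2 → L₁ ≠ L₂ → M₁ ≠ M₂ →
      (∃ W : Submodule K (Fin d → K), Module.finrank K W = 1 ∧ W ≤ L₁ ∧ W ≤ L₂) →
      (∃ W : Submodule K (Fin d → K), Module.finrank K W = 1 ∧ W ≤ M₁ ∧ W ≤ M₂) →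
      ∃ e ∈ H, L₁.map (e : (Fin d → K) →ₗ[K] (Fin d → K)) = M₁ ∧
        L₂.map (e : (Fin d → K) →ₗ[K] (Fin d → K)) = M₂) ∧
    (∀ L₁ L₂ M₁ M₂ : Submodule K (Fin d → K),
      Module.finrank K L₁ = 2 → Module.finrank K L₂ = 2 →
      Module.finrank K M₁ = 2 → Module.finrank K M₂ = 2 →
      (¬ ∃ W : Submodule K (Fin d → K), Module.finrank K W = 1 ∧ W ≤ L₁ ∧ W ≤ L₂) →
      (¬ ∃ W : Submodule K (Fin d → K), Module.finrank K W = 1 ∧ W ≤ M₁ ∧ W ≤ M₂) →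
      ∃ e ∈ H, L₁.map (e : (Fin d → K) →ₗ[K] (Fin d → K)) = M₁ ∧
        L₂.map (e : (Fin d → K) →ₗ[K] (Fin d → K)) = M₂) := by
  classical
  have hq : 2 ≤ Fintype.card K := Fintype.one_lt_card
  have hfr : finrank K (Fin d → K) = d := Module.finrank_fin_fun K
  refine ⟨⟨?_, ?_, ?_, by omega, ?_⟩, ?_, ?_, ?_, ?_, ?_, ?_, ?_⟩
  · -- number of points
    rw [pld_count_points, hfr]
  · -- points per line
    intro L hL
    exact pld_count_in_line hL
  · -- unique line through two points
    intro W W' hW hW' hne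
    exact pld_unique_line hW hW' hne
  · -- q + 1 < (q^d-1)/(q-1)
    rw [← Nat.geomSum_eq hq d]
    have h2 : Fintype.card K + 1 = ∑ i ∈ Finset.range 2, Fintype.card K ^ i := by
      rw [Finset.sum_range_succ, Finset.sum_range_one, pow_zero, pow_one]
      omega
    rw [h2]
    refine Finset.sum_lt_sum_of_subset (Finset.range_subset_range.mpr (by omega))
      (Finset.mem_range.mpr (by omega : 2 < d)) (by simp) (by positivity) ?_
    intro j _ _
    exact Nat.zero_le _
  · -- at most one common point
    intro L L' hL hL' hne
    exact pld_at_most_one hL hL' hne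
  · -- existence of disjoint lines
    set bf := Pi.basisFun K (Fin d) with hbf
    set v : Fin 4 → (Fin d → K) := fun i => bf (Fin.castLE hd i) with hv
    have hli4 : LinearIndependent K v :=
      bf.linearIndependent.comp _ (Fin.castLE_injective hd)
    have hpair : ∀ i j : Fin 4, i ≠ j → LinearIndependent K ![v i, v j] := by
      intro i j hij
      have hinj : Function.Injective (![i, j] : Fin 2 → Fin 4) := by
        intro s t hst
        fin_cases s <;> fin_cases t <;> simp_all
      have h := hli4.comp ![i, j] hinj
      have heq : (v ∘ ![i, j]) = ![v i, v j] := by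
        funext s; fin_cases s <;> simp
      rwa [heq] at h
    refine ⟨span K {v 0, v 1}, span K {v 2, v 3},
      pld_span_pair_finrank (hpair 0 1 (by decide)),
      pld_span_pair_finrank (hpair 2 3 (by decide)), ?_⟩
    rintro ⟨W, hW, hWL, hWL'⟩
    have hbot : W ≠ ⊥ := by
      intro hb; rw [hb, finrank_bot] at hW; omega
    obtain ⟨x, hxW, hx0⟩ := Submodule.exists_mem_ne_zero_of_ne_bot hbot
    obtain ⟨s, t, hst⟩ := Submodule.mem_span_pair.mp (hWL hxW)
    obtain ⟨u, w, huw⟩ := Submodule.mem_span_pair.mp (hWL' hxW)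
    have hsum : ∑ i, (![s, t, -u, -w] : Fin 4 → K) i • v i = 0 := by
      rw [Fin.sum_univ_four]
      simp only [Matrix.cons_val_zero, Matrix.cons_val_one, Matrix.head_cons,
        Matrix.cons_val_two, Matrix.tail_cons, Matrix.cons_val_three]
      calc s • v 0 + t • v 1 + (-u) • v 2 + (-w) • v 3
          = (s • v 0 + t • v 1) - (u • v 2 + w • v 3) := by
            rw [neg_smul, neg_smul]; abel
        _ = x - x := by rw [hst, huw]
        _ = 0 := sub_self x
    have hz := Fintype.linearIndependent_iff.mp hli4 _ hsum
    have hs0 : s = 0 := by simpa using hz 0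
    have ht0 : t = 0 := by simpa using hz 1
    rw [hs0, ht0, zero_smul, zero_smul, add_zero] at hst
    exact hx0 hst.symm
  · -- pairs of distinct points
    intro W₁ W₂ U₁ U₂ hW1 hW2 hU1 hU2 hWne hUne
    have hdec : ∀ A B : Submodule K (Fin d → K), finrank K A = 1 → finrank K B = 1 → A ≠ B →
        ∃ x y : Fin d → K, A = span K {x} ∧ B = span K {y} ∧ LinearIndependent K ![x, y] := by
      intro A B hA hB hAB
      obtain ⟨x, hx, hAs⟩ := pld_point hA
      obtain ⟨y, hy, hBs⟩ := pld_point hB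
      refine ⟨x, y, hAs, hBs, pld_pair_li hx ?_⟩
      intro hm
      apply hAB
      refine (Submodule.eq_of_le_of_finrank_le ?_ (by rw [hA, hB])).symm
      rw [hBs, span_le, Set.singleton_subset_iff, hAs]
      exact hm
    obtain ⟨x1, x2, hW1s, hW2s, hliW⟩ := hdec W₁ W₂ hW1 hW2 hWne
    obtain ⟨y1, y2, hU1s, hU2s, hliU⟩ := hdec U₁ U₂ hU1 hU2 hUne
    obtain ⟨e, heH, he⟩ := pld_move H hSL (by omega) (by omega : 2 ≤ d)
      ![x1, x2] ![y1, y2] hliW hliU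
    obtain ⟨a0, ha0, he0⟩ := he 0
    obtain ⟨a1, ha1, he1⟩ := he 1
    simp only [Matrix.cons_val_zero, Matrix.cons_val_one, Matrix.head_cons] at he0 he1
    refine ⟨e, heH, ?_, ?_⟩
    · rw [hW1s, pld_map_span_singleton, he0, Submodule.span_singleton_smul_eq ha0, ← hU1s]
    · rw [hW2s, pld_map_span_singleton, he1, Submodule.span_singleton_smul_eq ha1, ← hU2s]
  · -- flags
    intro W U L M hW hU hL hM hWL hUM
    have hdec : ∀ (A B : Submodule K (Fin d → K)), finrank K A = 1 → finrank K B = 2 → A ≤ B →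
        ∃ x y : Fin d → K, A = span K {x} ∧ B = span K {x, y} ∧ LinearIndependent K ![x, y] := by
      intro A B hA hB hAB
      obtain ⟨x, hx, hAs⟩ := pld_point hA
      obtain ⟨y, hBs, hli⟩ := pld_flag_ext hB hx
        (hAB (hAs ▸ Submodule.mem_span_singleton_self x))
      exact ⟨x, y, hAs, hBs, hli⟩
    obtain ⟨x1, x2, hWs, hLs, hliW⟩ := hdec W L hW hL hWL
    obtain ⟨y1, y2, hUs, hMs, hliU⟩ := hdec U M hU hM hUM
    obtain ⟨e, heH, he⟩ := pld_move H hSL (by omega) (by omega : 2 ≤ d)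
      ![x1, x2] ![y1, y2] hliW hliU
    obtain ⟨a0, ha0, he0⟩ := he 0
    obtain ⟨a1, ha1, he1⟩ := he 1
    simp only [Matrix.cons_val_zero, Matrix.cons_val_one, Matrix.head_cons] at he0 he1
    refine ⟨e, heH, ?_, ?_⟩
    · rw [hWs, pld_map_span_singleton, he0, Submodule.span_singleton_smul_eq ha0, ← hUs]
    · rw [hLs, pld_map_span_pair, he0, he1, pld_span_smul_pair ha0 ha1, ← hMs]
  · -- antiflags
    intro W U L M hW hU hL hM hWL hUM
    have hdec : ∀ (A B : Submodule K (Fin d → K)), finrank K A = 1 → finrank K B = 2 →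
        ¬ A ≤ B → ∃ x y z : Fin d → K, A = span K {x} ∧ B = span K {y, z} ∧
          LinearIndependent K ![x, y, z] := by
      intro A B hA hB hAB
      obtain ⟨x, hx, hAs⟩ := pld_point hA
      obtain ⟨y, z, hBs, hli⟩ := pld_line hB
      refine ⟨x, y, z, hAs, hBs, pld_li_triple hli ?_⟩
      rw [← hBs]
      intro hm
      apply hAB
      rw [hAs, span_le, Set.singleton_subset_iff]
      exact hm
    obtain ⟨x1, x2, x3, hWs, hLs, hliW⟩ := hdec W L hW hL hWL
    obtain ⟨y1, y2, y3, hUs, hMs, hliU⟩ := hdec U M hU hM hUM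
    obtain ⟨e, heH, he⟩ := pld_move H hSL (by omega) (by omega : 3 ≤ d)
      ![x1, x2, x3] ![y1, y2, y3] hliW hliU
    obtain ⟨a0, ha0, he0⟩ := he 0
    obtain ⟨a1, ha1, he1⟩ := he 1
    obtain ⟨a2, ha2, he2⟩ := he 2
    simp only [Matrix.cons_val_zero, Matrix.cons_val_one, Matrix.head_cons,
      Matrix.cons_val_two, Matrix.tail_cons] at he0 he1 he2
    refine ⟨e, heH, ?_, ?_⟩
    · rw [hWs, pld_map_span_singleton, he0, Submodule.span_singleton_smul_eq ha0, ← hUs]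
    · rw [hLs, pld_map_span_pair, he1, he2, pld_span_smul_pair ha1 ha2, ← hMs]
  · -- intersecting line pairs
    intro L₁ L₂ M₁ M₂ hL1 hL2 hM1 hM2 hLne hMne hLmeet hMmeet
    have hdec : ∀ (A B : Submodule K (Fin d → K)), finrank K A = 2 → finrank K B = 2 →
        A ≠ B → (∃ W : Submodule K (Fin d → K), finrank K W = 1 ∧ W ≤ A ∧ W ≤ B) →
        ∃ x y z : Fin d → K, A = span K {x, y} ∧ B = span K {x, z} ∧
          LinearIndependent K ![z, x, y] := by
      intro A B hA hB hAB ⟨W0, hW0, hW0A, hW0B⟩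
      have hWinf : W0 ≤ A ⊓ B := le_inf hW0A hW0B
      have h1le : 1 ≤ finrank K (A ⊓ B : Submodule K (Fin d → K)) :=
        hW0 ▸ Submodule.finrank_mono hWinf
      have hle2 : finrank K (A ⊓ B : Submodule K (Fin d → K)) ≤ 2 :=
        hA ▸ Submodule.finrank_mono inf_le_left
      have hne2 : finrank K (A ⊓ B : Submodule K (Fin d → K)) ≠ 2 := by
        intro h
        have hinfA : A ⊓ B = A := Submodule.eq_of_le_of_finrank_le inf_le_left (by omega)
        have hAB' : A ≤ B := by rw [← hinfA]; exact inf_le_right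
        exact hAB (Submodule.eq_of_le_of_finrank_le hAB' (by omega))
      have hinf1 : finrank K (A ⊓ B : Submodule K (Fin d → K)) = 1 := by omega
      obtain ⟨x, hx, hinfs⟩ := pld_point hinf1
      have hxAB : x ∈ A ⊓ B := hinfs ▸ Submodule.mem_span_singleton_self x
      obtain ⟨y, hAs, hliA⟩ := pld_flag_ext hA hx hxAB.1
      obtain ⟨z, hBs, hliB⟩ := pld_flag_ext hB hx hxAB.2
      refine ⟨x, y, z, hAs, hBs, pld_li_triple hliA ?_⟩
      rw [← hAs]
      intro hzA
      apply hAB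
      have hBA : B ≤ A := by
        rw [hBs, span_le, Set.insert_subset_iff, Set.singleton_subset_iff]
        exact ⟨hxAB.1, hzA⟩
      exact (Submodule.eq_of_le_of_finrank_le hBA (by omega)).symm
    obtain ⟨x1, x2, x3, hL1s, hL2s, hliL⟩ := hdec L₁ L₂ hL1 hL2 hLne hLmeet
    obtain ⟨y1, y2, y3, hM1s, hM2s, hliM⟩ := hdec M₁ M₂ hM1 hM2 hMne hMmeet
    obtain ⟨e, heH, he⟩ := pld_move H hSL (by omega) (by omega : 3 ≤ d)
      ![x3, x1, x2] ![y3, y1, y2] hliL hliM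
    obtain ⟨a0, ha0, he0⟩ := he 0
    obtain ⟨a1, ha1, he1⟩ := he 1
    obtain ⟨a2, ha2, he2⟩ := he 2
    simp only [Matrix.cons_val_zero, Matrix.cons_val_one, Matrix.head_cons,
      Matrix.cons_val_two, Matrix.tail_cons] at he0 he1 he2
    refine ⟨e, heH, ?_, ?_⟩
    · rw [hL1s, pld_map_span_pair, he1, he2, pld_span_smul_pair ha1 ha2, ← hM1s]
    · rw [hL2s, pld_map_span_pair, he1, he0, pld_span_smul_pair ha1 ha0, ← hM2s]
  · -- disjoint line pairs
    intro L₁ L₂ M₁ M₂ hL1 hL2 hM1 hM2 hLdis hMdis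
    have hdec : ∀ (A B : Submodule K (Fin d → K)), finrank K A = 2 → finrank K B = 2 →
        (¬ ∃ W : Submodule K (Fin d → K), finrank K W = 1 ∧ W ≤ A ∧ W ≤ B) →
        ∃ p q r s : Fin d → K, A = span K {p, q} ∧ B = span K {r, s} ∧
          LinearIndependent K ![p, q, r, s] := by
      intro A B hA hB hdis
      have hinf : A ⊓ B = ⊥ := by
        by_contra hb
        obtain ⟨z, hz, hz0⟩ := Submodule.exists_mem_ne_zero_of_ne_bot hb
        refine hdis ⟨span K {z}, finrank_span_singleton hz0, ?_, ?_⟩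
        · rw [span_le, Set.singleton_subset_iff]; exact hz.1
        · rw [span_le, Set.singleton_subset_iff]; exact hz.2
      obtain ⟨p, q, hAs, hliA⟩ := pld_line hA
      obtain ⟨r, s, hBs, hliB⟩ := pld_line hB
      have hqA : q ∈ A := hAs ▸ Submodule.subset_span (by simp)
      have hpA : p ∈ A := hAs ▸ Submodule.subset_span (by simp)
      have hq0 : q ≠ 0 := by
        have := hliA.ne_zero 1
        simpa using this
      have hqB : q ∉ span K ({r, s} : Set (Fin d → K)) := by
        rw [← hBs]
        intro hm
        have : q ∈ A ⊓ B := ⟨hqA, hm⟩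
        rw [hinf] at this
        exact hq0 this
      have hli3 : LinearIndependent K ![q, r, s] := pld_li_triple hliB hqB
      have hpm : p ∉ span K ({q, r, s} : Set (Fin d → K)) := by
        intro hm
        rw [show ({q, r, s} : Set (Fin d → K)) = insert q {r, s} from rfl,
          Submodule.span_insert, ← hBs] at hm
        obtain ⟨y', hy', z, hz, hsum⟩ := Submodule.mem_sup.mp hm
        obtain ⟨β, rfl⟩ := Submodule.mem_span_singleton.mp hy'
        have hzA : z ∈ A := by
          have hzz : z = p - β • q := by
            rw [← hsum]; abel
          rw [hzz]
          exact Submodule.sub_mem _ hpA (Submodule.smul_mem _ _ hqA)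
        have : z ∈ A ⊓ B := ⟨hzA, hz⟩
        rw [hinf, Submodule.mem_bot] at this
        rw [this, add_zero] at hsum
        have hps : p ∈ span K ({q} : Set (Fin d → K)) := by
          rw [← hsum]
          exact Submodule.smul_mem _ _ (Submodule.mem_span_singleton_self q)
        exact pld_li_pair_left hliA hps
      have hli4 : LinearIndependent K ![p, q, r, s] := by
        have hr : Set.range ![q, r, s] = {q, r, s} := pld_range3 q r s
        exact linearIndependent_fin_cons.mpr ⟨hli3, by rwa [hr]⟩
      exact ⟨p, q, r, s, hAs, hBs, hli4⟩
    obtain ⟨x1, x2, x3, x4, hL1s, hL2s, hliL⟩ := hdec L₁ L₂ hL1 hL2 hLdis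
    obtain ⟨y1, y2, y3, y4, hM1s, hM2s, hliM⟩ := hdec M₁ M₂ hM1 hM2 hMdis
    obtain ⟨e, heH, he⟩ := pld_move H hSL (by omega) hd
      ![x1, x2, x3, x4] ![y1, y2, y3, y4] hliL hliM
    obtain ⟨a0, ha0, he0⟩ := he 0
    obtain ⟨a1, ha1, he1⟩ := he 1
    obtain ⟨a2, ha2, he2⟩ := he 2
    obtain ⟨a3, ha3, he3⟩ := he 3
    simp only [Matrix.cons_val_zero, Matrix.cons_val_one, Matrix.head_cons,
      Matrix.cons_val_two, Matrix.tail_cons, Matrix.cons_val_three] at he0 he1 he2 he3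
    refine ⟨e, heH, ?_, ?_⟩
    · rw [hL1s, pld_map_span_pair, he0, he1, pld_span_smul_pair ha0 ha1, ← hM1s]
    · rw [hL2s, pld_map_span_pair, he2, he3, pld_span_smul_pair ha2 ha3, ← hM2s]
end
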